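/- arXiv:0707.4328 — 6 statements merged into one kernel-verified Lean document; each statement's English description precedes it below -/
import Mathlib

section
/- For all positive integers m and n and any complex number x with x ≠ -1, x^m ≠ 1, the identity ∑_{r_1,…,r_m ≤ n} ∏_{k=1}^{m} C(n-r_k, r_{k+1}) · (-x)^{r_k} / (1+x)^{2r_k} = (1 - x^{m(n+1)}) / ((1-x^m)(1+x)^{mn}) holds, where the sum is over all tuples (r_1,…,r_m) of nonnegative integers each at most n, and r_{m+1} := r_1. -/
open Polynomial Finset

lemma entry_lemma {ι : Type} [Fintype ι] [DecidableEq ι] (B : Matrix ι ι ℂ) :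
    ∀ (M : ℕ) (i j : ι), (B ^ (M+1)) i j =
      ∑ r : Fin M → ι, ((∏ k : Fin M, B ((Fin.cons i r : Fin (M+1) → ι) k.castSucc)
          ((Fin.cons i r : Fin (M+1) → ι) k.succ))
        * B ((Fin.cons i r : Fin (M+1) → ι) (Fin.last M)) j) := by
  intro M
  induction M with
  | zero => intro i j; simp [pow_one]
  | succ M ih =>
    intro i j
    rw [pow_succ', Matrix.mul_apply]
    simp_rw [ih]
    rw [← Equiv.sum_comp (Fin.consEquiv (fun _ => ι)), Fintype.sum_prod_type]
    congr 1
    ext s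
    rw [Finset.mul_sum]
    congr 1
    ext r
    show B i s * ((∏ k : Fin M, B ((Fin.cons s r : Fin (M+1) → ι) k.castSucc) ((Fin.cons s r : Fin (M+1) → ι) k.succ)) * B ((Fin.cons s r : Fin (M+1) → ι) (Fin.last M)) j) =
      (∏ k : Fin (M+1), B ((Fin.cons i (Fin.cons s r) : Fin (M+2) → ι) k.castSucc) ((Fin.cons i (Fin.cons s r) : Fin (M+2) → ι) k.succ)) * B ((Fin.cons i (Fin.cons s r) : Fin (M+2) → ι) (Fin.last (M+1))) j
    rw [Fin.prod_univ_succ]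
    have h0 : (Fin.cons i (Fin.cons s r) : Fin (M+2) → ι) ((0 : Fin (M+1)).castSucc) = i := rfl
    have h1 : (Fin.cons i (Fin.cons s r) : Fin (M+2) → ι) ((0 : Fin (M+1)).succ) = s := rfl
    rw [h0, h1]
    have h2 : ∀ k : Fin M, B ((Fin.cons i (Fin.cons s r) : Fin (M+2) → ι) (k.succ.castSucc)) ((Fin.cons i (Fin.cons s r) : Fin (M+2) → ι) (k.succ.succ)) = B ((Fin.cons s r : Fin (M+1) → ι) k.castSucc) ((Fin.cons s r : Fin (M+1) → ι) k.succ) := by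
      intro k
      rw [← Fin.succ_castSucc, Fin.cons_succ, Fin.cons_succ]
    have h3 : (Fin.cons i (Fin.cons s r) : Fin (M+2) → ι) (Fin.last (M+1)) = (Fin.cons s r : Fin (M+1) → ι) (Fin.last M) := by
      rw [show Fin.last (M+1) = (Fin.last M).succ from rfl, Fin.cons_succ]
    simp_rw [h2, h3]
    ring

lemma trace_cyclic {ι : Type} [Fintype ι] [DecidableEq ι] (B : Matrix ι ι ℂ) (M : ℕ) :
    Matrix.trace (B ^ (M+1)) = ∑ r : Fin (M+1) → ι, ∏ k : Fin (M+1), B (r k) (r (k+1)) := by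
  rw [Matrix.trace]
  unfold Matrix.diag
  simp_rw [entry_lemma]
  rw [← Equiv.sum_comp (Fin.consEquiv (fun _ => ι)), Fintype.sum_prod_type]
  congr 1; ext i; congr 1; ext r
  show (∏ k : Fin M, B ((Fin.cons i r : Fin (M+1) → ι) k.castSucc) ((Fin.cons i r : Fin (M+1) → ι) k.succ)) * B ((Fin.cons i r : Fin (M+1) → ι) (Fin.last M)) i
    = ∏ k : Fin (M+1), B ((Fin.cons i r : Fin (M+1) → ι) k) ((Fin.cons i r : Fin (M+1) → ι) (k+1))
  rw [Fin.prod_univ_castSucc]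
  congr 1
  · apply Finset.prod_congr rfl
    intro k _
    congr 1
    rw [show k.castSucc + 1 = k.succ by ext; simp [Fin.add_def]]
  · congr 1
    rw [show Fin.last M + 1 = 0 by ext; simp [Fin.add_def], Fin.cons_zero]

noncomputable section
variable (n : ℕ) (x : ℂ)

def Vp (s : ℕ) : ℂ[X] := (C (-x/(1+x)) - C (-1/(1+x)) * X)^s * (1 - X)^(n - s)

def Pm : Matrix (Fin (n+1)) (Fin (n+1)) ℂ := fun s j => (Vp n x (s:ℕ)).coeff (j:ℕ)
def Qm : Matrix (Fin (n+1)) (Fin (n+1)) ℂ :=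
  fun j s => ((X - C (-x/(1+x)))^(j:ℕ) * (X - C (-1/(1+x)))^(n-(j:ℕ))).coeff (s:ℕ)
def Am : Matrix (Fin (n+1)) (Fin (n+1)) ℂ :=
  fun r s => ((n - (r:ℕ)).choose (s:ℕ) : ℂ) * (-x)^(r:ℕ) / (1+x)^(2*(r:ℕ))
def Dm : Matrix (Fin (n+1)) (Fin (n+1)) ℂ := Matrix.diagonal (fun j => x^(j:ℕ) / (1+x)^n)

lemma binom_sum (u v : ℂ) (N R nn : ℕ) (h : N + R = nn) :
    ∑ s ∈ range (nn+1), (N.choose s : ℂ) * u^s * v^(nn-s) = v^R * (u+v)^N := by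
  rw [add_pow, Finset.mul_sum,
    ← Finset.sum_subset (Finset.range_subset_range.2 (by omega : N+1 ≤ nn+1))]
  · apply Finset.sum_congr rfl
    intro s hs
    rw [Finset.mem_range] at hs
    rw [show nn - s = (N - s) + R by omega, pow_add]
    ring
  · intro s _ hs
    rw [Finset.mem_range] at hs
    simp [Nat.choose_eq_zero_of_lt (by omega : N < s)]

lemma E1 (hx : (1:ℂ) + x ≠ 0) (r : ℕ) (hr : r ≤ n) :
    ∑ s : Fin (n+1), C (((n-r).choose (s:ℕ) : ℂ)) * Vp n x (s:ℕ)
      = C (((1+x)⁻¹)^(n-r)) * ((1 - X)^r * (1 - C x * X)^(n-r)) := by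
  apply Polynomial.funext
  intro t
  simp only [eval_finset_sum, eval_mul, eval_C, eval_pow, eval_sub, eval_one, eval_X, Vp]
  rw [Fin.sum_univ_eq_sum_range (fun s => ((n-r).choose s : ℂ) * ((-x/(1+x) - (-1/(1+x))*t)^s * (1-t)^(n-s)))]
  have := binom_sum (-x/(1+x) - (-1/(1+x))*t) (1-t) (n-r) r n (by omega)
  simp_rw [← mul_assoc]
  rw [this]
  have key : -x/(1+x) - (-1/(1+x))*t + (1-t) = (1 - x*t)/(1+x) := by
    field_simp
    ring
  rw [key, div_pow, inv_pow]
  field_simp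

lemma coeff_dilate (p : ℂ[X]) (j : ℕ) : (p.comp (C x * X)).coeff j = x^j * p.coeff j := by
  induction p using Polynomial.induction_on' with
  | add p q hp hq => simp [add_comp, hp, hq, mul_add]
  | monomial N a =>
    rw [monomial_comp, mul_pow, ← C_pow, ← mul_assoc, ← C_mul, C_mul_X_pow_eq_monomial]
    simp only [coeff_monomial]
    by_cases hN : N = j <;> simp [hN, mul_comm]

lemma E2 (hx : (1:ℂ) + x ≠ 0) : Am n x * Pm n x = Pm n x * Dm n x := by
  ext r j
  rw [Matrix.mul_apply, Matrix.mul_apply]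
  have hrn : (r:ℕ) ≤ n := by omega
  -- RHS: ∑ s, P r s * D s j = P r j * lam j
  have hR : ∑ s, Pm n x r s * Dm n x s j = (x^(j:ℕ) / (1+x)^n) * Pm n x r j := by
    rw [Finset.sum_eq_single j]
    · simp [Dm, Matrix.diagonal]; ring
    · intro s _ hs
      have : Dm n x s j = 0 := Matrix.diagonal_apply_ne _ hs
      rw [this, mul_zero]
    · simp
  rw [hR]
  -- LHS
  have hL : ∑ s, Am n x r s * Pm n x s j
      = (-x)^(r:ℕ) / (1+x)^(2*(r:ℕ)) * ((∑ s : Fin (n+1), C (((n-(r:ℕ)).choose (s:ℕ) : ℂ)) * Vp n x (s:ℕ)).coeff (j:ℕ)) := by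
    rw [Polynomial.finset_sum_coeff, Finset.mul_sum]
    apply Finset.sum_congr rfl
    intro s _
    simp only [Am, Pm, coeff_C_mul]
    ring
  rw [hL, E1 n x hx (r:ℕ) hrn]
  -- now coefficient of the dilation
  have hfac : (C (-x/(1+x)) - C (-1/(1+x)) * (C x * X) : ℂ[X]) = C (-x/(1+x)) * (1 - X) := by
    rw [mul_sub, mul_one]
    congr 1
    rw [← mul_assoc, ← C_mul]
    congr 2
    ring
  have hdil : C ((-x/(1+x))^(r:ℕ)) * ((1 - X)^(r:ℕ) * (1 - C x * X)^(n-(r:ℕ)))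
      = (Vp n x (r:ℕ)).comp (C x * X) := by
    rw [Vp, mul_comp, pow_comp, pow_comp, sub_comp, sub_comp, mul_comp, C_comp, C_comp,
      one_comp, X_comp, hfac, mul_pow, ← C_pow]
    ring
  have hc := coeff_dilate x (Vp n x (r:ℕ)) (j:ℕ)
  rw [← hdil, coeff_C_mul] at hc
  -- hc : (-x/(1+x))^r * coeff j ((1-X)^r (1-CxX)^{n-r}) = x^j * P r j
  rw [coeff_C_mul]
  -- goal: (-x)^r/(1+x)^{2r} * ((1+x)⁻¹^{n-r} * coeff) = x^j/(1+x)^n * P r j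
  have hcoef : ((1 - X : ℂ[X])^(r:ℕ) * (1 - C x * X)^(n-(r:ℕ))).coeff (j:ℕ)
      = ((1 - X : ℂ[X])^(r:ℕ) * (1 - C x * X)^(n-(r:ℕ))).coeff (j:ℕ) := rfl
  set cf := ((1 - X : ℂ[X])^(r:ℕ) * (1 - C x * X)^(n-(r:ℕ))).coeff (j:ℕ) with hcf
  rw [Pm]
  -- use hc : (-x/(1+x))^r * cf = x^j * (Vp).coeff j
  have expand : (-x)^(r:ℕ) / (1+x)^(2*(r:ℕ)) * ((1+x)⁻¹^(n-(r:ℕ)) * cf)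
      = ((-x/(1+x))^(r:ℕ) * cf) / (1+x)^n := by
    have hn' : ((1:ℂ)+x)^n = (1+x)^(r:ℕ) * (1+x)^(n-(r:ℕ)) := by
      rw [← pow_add]; congr 1; omega
    have h1 : ((1:ℂ)+x)^(r:ℕ) ≠ 0 := pow_ne_zero _ hx
    have h2 : ((1:ℂ)+x)^(n-(r:ℕ)) ≠ 0 := pow_ne_zero _ hx
    rw [hn', div_pow, two_mul, pow_add, inv_pow]
    field_simp
  rw [expand, hc]
  ring

lemma deg_Vp (s : ℕ) (hs : s ≤ n) : (Vp n x s).natDegree ≤ n := by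
  rw [Vp]
  apply le_trans (natDegree_mul_le)
  have h1 : (C (-x/(1+x)) - C (-1/(1+x)) * X : ℂ[X]).natDegree ≤ 1 := by
    apply le_trans (natDegree_sub_le _ _)
    simp [natDegree_C_mul_le]
    exact le_trans (natDegree_mul_le) (by simp)
  have h2 : ((C (-x/(1+x)) - C (-1/(1+x)) * X : ℂ[X])^s).natDegree ≤ s :=
    le_trans (natDegree_pow_le) (by nlinarith)
  have h3 : ((1 - X : ℂ[X])^(n-s)).natDegree ≤ n - s := by
    apply le_trans (natDegree_pow_le)
    have : (1 - X : ℂ[X]).natDegree ≤ 1 := by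
      apply le_trans (natDegree_sub_le _ _); simp
    nlinarith
  omega

lemma E3poly (hx : (1:ℂ) + x ≠ 0) (r : ℕ) (hr : r ≤ n) :
    ∑ j : Fin (n+1), C ((Vp n x r).coeff (j:ℕ)) *
        ((X - C (-x/(1+x)))^(j:ℕ) * (X - C (-1/(1+x)))^(n-(j:ℕ)))
      = C ((-x/(1+x) - (-1/(1+x)))^n) * X^r := by
  apply eq_of_infinite_eval_eq
  apply Set.Infinite.mono (s := {a : ℂ | a ≠ -1/(1+x)})
  swap
  · exact Set.Finite.infinite_compl (Set.finite_singleton _)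
  intro a ha
  simp only [Set.mem_setOf_eq] at ha ⊢
  have hab : a - (-1/(1+x)) ≠ 0 := sub_ne_zero.2 ha
  simp only [eval_finset_sum, eval_mul, eval_C, eval_pow, eval_sub, eval_X]
  set A := -x/(1+x) with hA
  set B := -1/(1+x) with hB
  set t := (a - A)/(a - B) with ht
  have h1 : ∀ j : Fin (n+1), (a-A)^(j:ℕ) * (a-B)^(n-(j:ℕ)) = t^(j:ℕ) * (a-B)^n := by
    intro j
    have hj : (j:ℕ) ≤ n := by omega
    rw [ht, div_pow, show (a-B)^n = (a-B)^(j:ℕ) * (a-B)^(n-(j:ℕ)) by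
      rw [← pow_add]; congr 1; omega]
    field_simp
  simp_rw [h1]
  have h2 : ∑ j : Fin (n+1), (Vp n x r).coeff (j:ℕ) * (t^(j:ℕ) * (a-B)^n)
      = (∑ j : Fin (n+1), (Vp n x r).coeff (j:ℕ) * t^(j:ℕ)) * (a-B)^n := by
    rw [Finset.sum_mul]; apply Finset.sum_congr rfl; intro j _; ring
  rw [h2]
  have h3 : ∑ j : Fin (n+1), (Vp n x r).coeff (j:ℕ) * t^(j:ℕ) = (Vp n x r).eval t := by
    rw [Polynomial.eval_eq_sum_range' (lt_of_le_of_lt (deg_Vp n x r hr) (Nat.lt_succ_self n)),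
      Fin.sum_univ_eq_sum_range (fun j => (Vp n x r).coeff j * t^j)]
  rw [h3]
  have h4 : (Vp n x r).eval t = (A - B*t)^r * (1-t)^(n-r) := by
    simp [Vp, hA, hB]
  rw [h4]
  have e1 : A - B*t = a*(A-B)/(a-B) := by
    rw [ht]; field_simp; ring
  have e2 : 1 - t = (A-B)/(a-B) := by
    rw [ht]; field_simp; ring
  rw [e1, e2, div_pow, div_pow]
  rw [show (A-B)^n = (A-B)^r * (A-B)^(n-r) by rw [← pow_add]; congr 1; omega,
    show (a-B)^n = (a-B)^r * (a-B)^(n-r) by rw [← pow_add]; congr 1; omega]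
  rw [mul_pow]
  field_simp

lemma E3 (hx : (1:ℂ) + x ≠ 0) :
    Pm n x * Qm n x = ((-x/(1+x) - (-1/(1+x)))^n) • (1 : Matrix (Fin (n+1)) (Fin (n+1)) ℂ) := by
  ext r s
  rw [Matrix.mul_apply]
  have : ∑ j : Fin (n+1), Pm n x r j * Qm n x j s
      = (∑ j : Fin (n+1), C ((Vp n x (r:ℕ)).coeff (j:ℕ)) *
        ((X - C (-x/(1+x)))^(j:ℕ) * (X - C (-1/(1+x)))^(n-(j:ℕ)))).coeff (s:ℕ) := by
    rw [Polynomial.finset_sum_coeff]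
    apply Finset.sum_congr rfl
    intro j _
    rw [coeff_C_mul]
    rfl
  rw [this, E3poly n x hx (r:ℕ) (by omega)]
  rw [coeff_C_mul, coeff_X_pow]
  rw [Matrix.smul_apply, Matrix.one_apply]
  by_cases h : r = s
  · simp [h]
  · have h' : (s:ℕ) ≠ (r:ℕ) := fun hh => h (Fin.ext hh).symm
    simp [h, h']

lemma trace_Am (hx : (1:ℂ) + x ≠ 0) (hx1 : x ≠ 1) (M : ℕ) :
    Matrix.trace ((Am n x)^(M+1)) = ∑ j : Fin (n+1), (x^(j:ℕ)/(1+x)^n)^(M+1) := by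
  set c : ℂ := (-x/(1+x) - (-1/(1+x)))^n with hc'
  have hc : c ≠ 0 := by
    apply pow_ne_zero
    intro h
    apply hx1
    field_simp at h
    have h3 : (1 - x) * (1 + x) = 0 := by linear_combination (1 + x) * h
    rcases mul_eq_zero.mp h3 with h4 | h4
    · linear_combination -h4
    · exact absurd h4 hx
  set Q' : Matrix (Fin (n+1)) (Fin (n+1)) ℂ := c⁻¹ • Qm n x with hQ'
  have hPQ : Pm n x * Q' = 1 := by
    rw [hQ', Matrix.mul_smul, E3 n x hx, smul_smul, inv_mul_cancel₀ hc, one_smul]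
  have hQP : Q' * Pm n x = 1 := mul_eq_one_comm.mp hPQ
  have hA1 : Am n x = Pm n x * Dm n x * Q' := by
    calc Am n x = Am n x * (Pm n x * Q') := by rw [hPQ, mul_one]
    _ = (Am n x * Pm n x) * Q' := by rw [mul_assoc]
    _ = Pm n x * Dm n x * Q' := by rw [E2 n x hx]
  have hAp : ∀ k : ℕ, (Am n x)^(k+1) = Pm n x * (Dm n x)^(k+1) * Q' := by
    intro k
    induction k with
    | zero => rw [pow_one, pow_one]; exact hA1
    | succ k ih =>
      calc (Am n x)^(k+1+1) = (Am n x)^(k+1) * Am n x := by rw [pow_succ]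
      _ = (Pm n x * (Dm n x)^(k+1) * Q') * (Pm n x * Dm n x * Q') := by rw [ih, hA1]
      _ = Pm n x * ((Dm n x)^(k+1) * ((Q' * Pm n x) * Dm n x)) * Q' := by
          simp only [mul_assoc]
      _ = Pm n x * (Dm n x)^(k+1+1) * Q' := by rw [hQP, one_mul, ← pow_succ, mul_assoc]
  rw [hAp M, Matrix.trace_mul_comm, ← mul_assoc, hQP, one_mul]
  rw [Dm, Matrix.diagonal_pow, Matrix.trace_diagonal]
  rfl

theorem stmt0 (m n : ℕ) (hm : 0 < m) (hn : 0 < n) (x : ℂ) (hx1 : x ≠ -1) (hx2 : x ^ m ≠ 1) :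
    ∑ r : Fin m → Fin (n + 1), ∏ k : Fin m,
      (((n - (r k : ℕ)).choose (r ⟨((k : ℕ) + 1) % m, Nat.mod_lt _ hm⟩ : ℕ) : ℂ) *
        (-x) ^ (r k : ℕ) / (1 + x) ^ (2 * (r k : ℕ)))
    = (1 - x ^ (m * (n + 1))) / ((1 - x ^ m) * (1 + x) ^ (m * n)) := by
  have hx : (1:ℂ) + x ≠ 0 := by
    intro h; exact hx1 (by linear_combination h)
  have hxm1 : x ≠ 1 := by rintro rfl; simp at hx2
  obtain ⟨M, rfl⟩ : ∃ M, m = M + 1 := ⟨m - 1, by omega⟩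
  have hL : ∑ r : Fin (M+1) → Fin (n + 1), ∏ k : Fin (M+1),
      (((n - (r k : ℕ)).choose (r ⟨((k : ℕ) + 1) % (M+1), Nat.mod_lt _ hm⟩ : ℕ) : ℂ) *
        (-x) ^ (r k : ℕ) / (1 + x) ^ (2 * (r k : ℕ)))
      = ∑ r : Fin (M+1) → Fin (n+1), ∏ k : Fin (M+1), Am n x (r k) (r (k+1)) := by
    apply Finset.sum_congr rfl
    intro r _
    apply Finset.prod_congr rfl
    intro k _
    have hidx : (⟨((k:ℕ) + 1) % (M+1), Nat.mod_lt _ hm⟩ : Fin (M+1)) = k + 1 := by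
      ext
      simp [Fin.add_def, Nat.add_mod_mod]
    rw [hidx]
    rfl
  rw [hL, ← trace_cyclic, trace_Am n x hx hxm1 M]
  have hstep : ∀ j : Fin (n+1), (x^(j:ℕ)/(1+x)^n)^(M+1) = (x^(M+1))^(j:ℕ) / (1+x)^(n*(M+1)) := by
    intro j
    rw [div_pow, ← pow_mul, ← pow_mul, mul_comm (j:ℕ) (M+1), pow_mul]
  simp_rw [hstep]
  rw [← Finset.sum_div]
  rw [Fin.sum_univ_eq_sum_range (fun j => (x^(M+1))^j)]
  rw [geom_sum_eq hx2]
  have h1 : ((1:ℂ)+x)^(n*(M+1)) ≠ 0 := pow_ne_zero _ hx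
  have h2 : (x^(M+1) - 1 : ℂ) ≠ 0 := sub_ne_zero.2 hx2
  have h3 : ((1:ℂ) - x^(M+1)) ≠ 0 := fun h => h2 (by linear_combination -h)
  rw [div_div, ← pow_mul]
  rw [show (M+1)*(n+1) = (M+1)*(n+1) from rfl]
  rw [show ((1:ℂ)+x)^((M+1)*n) = (1+x)^(n*(M+1)) by rw [mul_comm]]
  rw [div_eq_div_iff (by exact mul_ne_zero h2 h1) (by exact mul_ne_zero h3 h1)]
  ring
end
end

section
/- For all nonnegative integers n, ∑_{k=0}^{⌊n/2⌋} (-1)^k q^{C(k,2)} · qbinom(n-k, k) equals (-1)^{⌊n/3⌋} q^{n(n-1)/6} if n ≢ 2 (mod 3), and equals 0 if n ≡ 2 (mod 3), as an identity of Laurent polynomials (or rational functions) in q. -/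
open Finset

/-- The Gaussian (q-)binomial coefficient as a rational function in `q = RatFunc.X`. -/
noncomputable def qbin (a b : ℕ) : RatFunc ℚ :=
  if b ≤ a then ∏ i ∈ Finset.range b,
    (1 - RatFunc.X ^ (a - i)) / (1 - RatFunc.X ^ (i + 1)) else 0

namespace QbinAux

noncomputable abbrev q : RatFunc ℚ := RatFunc.X

lemma one_sub_pow_ne (m : ℕ) (h : 1 ≤ m) : (1 - q ^ m : RatFunc ℚ) ≠ 0 := by
  have hp : (1 - Polynomial.X ^ m : Polynomial ℚ) ≠ 0 := by
    intro h0
    have := congrArg (fun p => Polynomial.coeff p m) h0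
    simp only [Polynomial.coeff_sub, Polynomial.coeff_one, Polynomial.coeff_X_pow,
      Polynomial.coeff_zero] at this
    norm_num [(show m ≠ 0 by omega)] at this
  have := RatFunc.algebraMap_ne_zero hp
  simpa [map_sub, map_pow, RatFunc.algebraMap_X] using this

noncomputable def num (a b : ℕ) : RatFunc ℚ := ∏ i ∈ range b, (1 - q ^ (a - i))
noncomputable def den (b : ℕ) : RatFunc ℚ := ∏ i ∈ range b, (1 - q ^ (i + 1))

lemma den_ne (b : ℕ) : den b ≠ 0 := by
  refine Finset.prod_ne_zero_iff.mpr fun i _ => one_sub_pow_ne _ (by omega)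

lemma qbin_def {a b : ℕ} (h : b ≤ a) : qbin a b = num a b / den b := by
  rw [qbin, if_pos h, num, den, ← Finset.prod_div_distrib]

lemma qbin_zero (a : ℕ) : qbin a 0 = 1 := by simp [qbin]

lemma qbin_eq_zero {a b : ℕ} (h : a < b) : qbin a b = 0 := by
  rw [qbin, if_neg (by omega)]

lemma num_succ_succ (a b : ℕ) : num (a + 1) (b + 1) = (1 - q ^ (a + 1)) * num a b := by
  rw [num, Finset.prod_range_succ' (fun i => (1 - q ^ (a + 1 - i)))]
  simp [num, mul_comm]

lemma num_succ (a b : ℕ) : num a (b + 1) = num a b * (1 - q ^ (a - b)) :=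
  Finset.prod_range_succ _ _

lemma den_succ (b : ℕ) : den (b + 1) = den b * (1 - q ^ (b + 1)) :=
  Finset.prod_range_succ _ _

lemma pascal1 (a b : ℕ) (h : b ≤ a) :
    qbin (a + 1) (b + 1) = q ^ (b + 1) * qbin a (b + 1) + qbin a b := by
  rcases eq_or_lt_of_le h with rfl | hlt
  · rw [qbin_eq_zero (show b < b + 1 by omega), mul_zero, zero_add,
      qbin_def (show b + 1 ≤ b + 1 from le_rfl), qbin_def (show b ≤ b from le_rfl),
      num_succ_succ, den_succ,
      mul_comm (den b), mul_div_mul_left _ _ (one_sub_pow_ne _ (by omega))]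
  · have hb1 : b + 1 ≤ a := hlt
    rw [qbin_def (show b + 1 ≤ a + 1 by omega), qbin_def hb1, qbin_def h,
      num_succ_succ, num_succ, den_succ]
    have h1 : (1 - q ^ (b + 1)) ≠ 0 := one_sub_pow_ne _ (by omega)
    have h2 : den b ≠ 0 := den_ne b
    have he : a + 1 = (b + 1) + (a - b) := by omega
    field_simp
    rw [he, pow_add]
    ring

lemma pascal2 (a b : ℕ) (h : b ≤ a) :
    qbin (a + 1) (b + 1) = qbin a (b + 1) + q ^ (a - b) * qbin a b := by
  rcases eq_or_lt_of_le h with rfl | hlt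
  · rw [qbin_eq_zero (show b < b + 1 by omega), zero_add, Nat.sub_self, pow_zero, one_mul,
      qbin_def (show b + 1 ≤ b + 1 from le_rfl), qbin_def (show b ≤ b from le_rfl),
      num_succ_succ, den_succ,
      mul_comm (den b), mul_div_mul_left _ _ (one_sub_pow_ne _ (by omega))]
  · have hb1 : b + 1 ≤ a := hlt
    rw [qbin_def (show b + 1 ≤ a + 1 by omega), qbin_def hb1, qbin_def h,
      num_succ_succ, num_succ, den_succ]
    have h1 : (1 - q ^ (b + 1)) ≠ 0 := one_sub_pow_ne _ (by omega)
    have h2 : den b ≠ 0 := den_ne b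
    have he : a + 1 = (a - b) + (b + 1) := by omega
    field_simp
    rw [he, pow_add]
    ring

lemma key1 (n j : ℕ) :
    qbin (n + 1 - j) (j + 1) = q ^ (j + 1) * qbin (n - j) (j + 1) + qbin (n - j) j := by
  by_cases h : 2 * j ≤ n
  · have e : n + 1 - j = (n - j) + 1 := by omega
    rw [e]; exact pascal1 (n - j) j (by omega)
  · rw [qbin_eq_zero (show n + 1 - j < j + 1 by omega),
      qbin_eq_zero (show n - j < j + 1 by omega),
      qbin_eq_zero (show n - j < j by omega)]
    ring

lemma key2 (n j : ℕ) :
    q ^ (2 * j + 1) * qbin (n + 1 - j) (j + 1)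
      = q ^ (2 * j + 1) * qbin (n - j) (j + 1) + q ^ (n + 1) * qbin (n - j) j := by
  by_cases h : 2 * j ≤ n
  · have e : n + 1 - j = (n - j) + 1 := by omega
    rw [e, pascal2 (n - j) j (by omega), mul_add, ← mul_assoc, ← pow_add]
    have e2 : 2 * j + 1 + (n - j - j) = n + 1 := by omega
    rw [e2]
  · rw [qbin_eq_zero (show n + 1 - j < j + 1 by omega),
      qbin_eq_zero (show n - j < j + 1 by omega),
      qbin_eq_zero (show n - j < j by omega)]
    ring

noncomputable def S (n : ℕ) : RatFunc ℚ :=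
  ∑ k ∈ range (n + 1), (-1 : RatFunc ℚ) ^ k * q ^ k.choose 2 * qbin (n - k) k

noncomputable def A (n : ℕ) : RatFunc ℚ :=
  ∑ k ∈ range (n + 1), (-1 : RatFunc ℚ) ^ k * q ^ (k.choose 2 + k) * qbin (n - k) k

lemma choose_succ (j : ℕ) : (j + 1).choose 2 = j.choose 2 + j := by
  rw [Nat.choose_succ_succ, Nat.choose_one_right, add_comm]

lemma S_rec (n : ℕ) : S (n + 2) = A (n + 1) - A n := by
  have hS : S (n + 2) = 1 + ∑ j ∈ range (n + 2),
      (-1 : RatFunc ℚ) ^ (j + 1) * q ^ (j + 1).choose 2 * qbin (n + 1 - j) (j + 1) := by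
    rw [S, Finset.sum_range_succ' _ (n + 2)]
    simp [qbin_zero, add_comm]
  have hA1 : A (n + 1) = 1 + ∑ j ∈ range (n + 2),
      (-1 : RatFunc ℚ) ^ (j + 1) * q ^ ((j + 1).choose 2 + (j + 1)) * qbin (n - j) (j + 1) := by
    rw [A, Finset.sum_range_succ' _ (n + 1), Finset.sum_range_succ _ (n + 1)]
    rw [qbin_eq_zero (show n - (n + 1) < n + 1 + 1 by omega)]
    simp [qbin_zero, add_comm]
  have hA0 : A n = ∑ j ∈ range (n + 2),
      (-1 : RatFunc ℚ) ^ j * q ^ (j.choose 2 + j) * qbin (n - j) j := by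
    rw [A, Finset.sum_range_succ _ (n + 1)]
    rw [qbin_eq_zero (show n - (n + 1) < n + 1 by omega)]
    simp
  rw [hS, hA1, hA0, add_sub_assoc, ← Finset.sum_sub_distrib]
  congr 1
  apply Finset.sum_congr rfl
  intro j _
  rw [choose_succ]
  linear_combination ((-1 : RatFunc ℚ) ^ (j + 1) * q ^ (j.choose 2 + j)) * key1 n j

lemma A_rec (n : ℕ) : A (n + 2) = A (n + 1) - q ^ (n + 1) * S n := by
  have hA2 : A (n + 2) = 1 + ∑ j ∈ range (n + 2),
      (-1 : RatFunc ℚ) ^ (j + 1) * q ^ ((j + 1).choose 2 + (j + 1)) * qbin (n + 1 - j) (j + 1) := by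
    rw [A, Finset.sum_range_succ' _ (n + 2)]
    simp [qbin_zero, add_comm]
  have hA1 : A (n + 1) = 1 + ∑ j ∈ range (n + 2),
      (-1 : RatFunc ℚ) ^ (j + 1) * q ^ ((j + 1).choose 2 + (j + 1)) * qbin (n - j) (j + 1) := by
    rw [A, Finset.sum_range_succ' _ (n + 1), Finset.sum_range_succ _ (n + 1)]
    rw [qbin_eq_zero (show n - (n + 1) < n + 1 + 1 by omega)]
    simp [qbin_zero, add_comm]
  have hS0 : S n = ∑ j ∈ range (n + 2),
      (-1 : RatFunc ℚ) ^ j * q ^ j.choose 2 * qbin (n - j) j := by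
    rw [S, Finset.sum_range_succ _ (n + 1)]
    rw [qbin_eq_zero (show n - (n + 1) < n + 1 by omega)]
    simp
  rw [hA2, hA1, hS0, Finset.mul_sum, add_sub_assoc, ← Finset.sum_sub_distrib]
  congr 1
  apply Finset.sum_congr rfl
  intro j _
  rw [choose_succ]
  linear_combination ((-1 : RatFunc ℚ) ^ (j + 1) * q ^ j.choose 2) * key2 n j

lemma S_rec3 (n : ℕ) : S (n + 3) = -(q ^ (n + 1)) * S n := by
  have h1 : S (n + 3) = A (n + 2) - A (n + 1) := S_rec (n + 1)
  rw [h1, A_rec n]; ring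

lemma qbin_one_one : qbin 1 1 = 1 := by
  rw [qbin_def (le_refl 1)]
  simp only [num, den, Finset.prod_range_one, Nat.sub_zero, pow_one, zero_add]
  exact div_self (by simpa using one_sub_pow_ne 1 le_rfl)

lemma S_zero : S 0 = 1 := by simp [S, qbin_zero]

lemma S_one : S 1 = 1 := by
  rw [S]
  simp [Finset.sum_range_succ, qbin_zero, qbin_eq_zero (show 0 < 1 by omega)]

lemma S_two : S 2 = 0 := by
  rw [S]
  simp [Finset.sum_range_succ, qbin_zero, qbin_one_one,
    qbin_eq_zero (show 0 < 2 by omega)]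

lemma main_aux : ∀ n : ℕ, S n = if n % 3 = 2 then 0
    else (-1 : RatFunc ℚ) ^ (n / 3) * q ^ (n * (n - 1) / 6) := by
  have step : ∀ m : ℕ, (S m = if m % 3 = 2 then 0
      else (-1 : RatFunc ℚ) ^ (m / 3) * q ^ (m * (m - 1) / 6)) →
      S (m + 3) = if (m + 3) % 3 = 2 then 0
      else (-1 : RatFunc ℚ) ^ ((m + 3) / 3) * q ^ ((m + 3) * ((m + 3) - 1) / 6) := by
    intro m hm
    rw [S_rec3 m, hm]
    by_cases h : m % 3 = 2
    · rw [if_pos h, if_pos (by omega), mul_zero]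
    · rw [if_neg h, if_neg (by omega)]
      have hd6 : 6 ∣ m * (m - 1) := by
        have h2 : 2 ∣ m * (m - 1) := by
          rcases Nat.even_or_odd m with he | ho
          · exact Dvd.dvd.mul_right he.two_dvd _
          · rcases ho with ⟨k, hk⟩
            exact Dvd.dvd.mul_left (by omega : 2 ∣ m - 1) _
        have h3 : 3 ∣ m * (m - 1) := by
          rcases (by omega : 3 ∣ m ∨ 3 ∣ m - 1) with hh | hh
          · exact hh.mul_right _
          · exact hh.mul_left _
        omega
      have hkey : (m + 3) * ((m + 3) - 1) = m * (m - 1) + 6 * (m + 1) := by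
        cases m with
        | zero => norm_num
        | succ k =>
          have e1 : k + 1 + 3 - 1 = k + 3 := by omega
          have e2 : k + 1 - 1 = k := by omega
          rw [e1, e2]; ring
      have hdiv : (m + 3) * ((m + 3) - 1) / 6 = m * (m - 1) / 6 + (m + 1) := by
        obtain ⟨c, hc⟩ := hd6
        rw [hkey, hc]
        omega
      have hq : (m + 3) / 3 = m / 3 + 1 := by omega
      rw [hdiv, hq, pow_add, pow_add]
      ring
  intro n
  have key : ∀ k : ℕ,
      (S k = if k % 3 = 2 then 0 else (-1 : RatFunc ℚ) ^ (k / 3) * q ^ (k * (k - 1) / 6)) ∧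
      (S (k+1) = if (k+1) % 3 = 2 then 0 else (-1 : RatFunc ℚ) ^ ((k+1) / 3) * q ^ ((k+1) * ((k+1) - 1) / 6)) ∧
      (S (k+2) = if (k+2) % 3 = 2 then 0 else (-1 : RatFunc ℚ) ^ ((k+2) / 3) * q ^ ((k+2) * ((k+2) - 1) / 6)) := by
    intro k
    induction k with
    | zero =>
      refine ⟨by simpa using S_zero, by simpa using S_one, by simp [S_two]⟩
    | succ j ih =>
      exact ⟨ih.2.1, ih.2.2, step j ih.1⟩
  exact (key n).1

lemma sum_eq_S (n : ℕ) :
    (∑ k ∈ Finset.range (n / 2 + 1),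
      (-1 : RatFunc ℚ) ^ k * RatFunc.X ^ k.choose 2 * qbin (n - k) k) = S n := by
  rw [S]
  apply Finset.sum_subset
  · exact Finset.range_subset_range.mpr (by omega)
  · intro k hk hk'
    simp only [Finset.mem_range] at hk hk'
    rw [qbin_eq_zero (show n - k < k by omega), mul_zero]

end QbinAux

theorem stmt1 (n : ℕ) :
    ∑ k ∈ Finset.range (n / 2 + 1),
      (-1 : RatFunc ℚ) ^ k * RatFunc.X ^ k.choose 2 * qbin (n - k) k
    = if n % 3 = 2 then 0
      else (-1 : RatFunc ℚ) ^ (n / 3) * RatFunc.X ^ (n * (n - 1) / 6) := by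
  rw [QbinAux.sum_eq_S]
  exact QbinAux.main_aux n
end

section
/- For all nonnegative integers L, ∑_{j=-L}^{L} (-1)^j q^{j(3j+1)/2} · qbinom(2L-j, L+j) = 1 as an identity of rational functions (or polynomials) in q. -/
open Finset

/-- The Gaussian (q-)binomial coefficient with integer indices, as a rational
function in `q = RatFunc.X`; it is `0` when the lower index is negative or
exceeds the upper index. -/
noncomputable def qbinZ (a b : ℤ) : RatFunc ℚ :=
  if 0 ≤ b ∧ b ≤ a then ∏ i ∈ Finset.range b.toNat,
    (1 - RatFunc.X ^ (a - (i : ℤ))) / (1 - RatFunc.X ^ ((i : ℤ) + 1)) else 0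

namespace PentAux

local notation "q" => (RatFunc.X : RatFunc ℚ)

lemma X_ne : (q : RatFunc ℚ) ≠ 0 := RatFunc.X_ne_zero

lemma one_sub_X_pow_ne {k : ℤ} (hk : 1 ≤ k) : (1 : RatFunc ℚ) - q ^ k ≠ 0 := by
  lift k to ℕ using le_trans zero_le_one hk with m
  rw [zpow_natCast]
  have : (1 : RatFunc ℚ) - q ^ m =
      algebraMap (Polynomial ℚ) (RatFunc ℚ) (1 - Polynomial.X ^ m) := by
    simp [map_sub, map_pow, RatFunc.algebraMap_X]
  rw [this]
  apply RatFunc.algebraMap_ne_zero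
  intro h
  have h2 := congrArg (Polynomial.eval 2) h
  simp [Polynomial.eval_pow] at h2
  have hm : (1:ℕ) ≤ m := by exact_mod_cast hk
  have : (2:ℚ)^1 ≤ 2^m := by
    apply pow_le_pow_right₀ (by norm_num) hm
  simp at this
  nlinarith [h2]

noncomputable def N (a : ℤ) (m : ℕ) : RatFunc ℚ := ∏ i ∈ Finset.range m, (1 - q ^ (a - (i : ℤ)))
noncomputable def D (m : ℕ) : RatFunc ℚ := ∏ i ∈ Finset.range m, (1 - q ^ ((i : ℤ) + 1))

lemma D_ne (m : ℕ) : D m ≠ 0 := by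
  apply Finset.prod_ne_zero_iff.2
  intro i _
  exact one_sub_X_pow_ne (by omega)

lemma qbin_eq {a b : ℤ} (hb : 0 ≤ b) (hba : b ≤ a) :
    qbinZ a b = N a b.toNat / D b.toNat := by
  rw [qbinZ, if_pos ⟨hb, hba⟩, Finset.prod_div_distrib]; rfl

lemma qbin_zero_of_lt {a b : ℤ} (h : a < b) : qbinZ a b = 0 := by
  rw [qbinZ, if_neg]; omega

lemma qbin_zero_of_neg {a b : ℤ} (h : b < 0) : qbinZ a b = 0 := by
  rw [qbinZ, if_neg]; omega

lemma qbin_zero' {a b : ℤ} (h : b < 0 ∨ a < b) : qbinZ a b = 0 := by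
  rcases h with h | h
  · exact qbin_zero_of_neg h
  · exact qbin_zero_of_lt h

lemma qbin_b_zero {a : ℤ} (ha : 0 ≤ a) : qbinZ a 0 = 1 := by
  rw [qbinZ, if_pos ⟨le_refl _, ha⟩]; simp

lemma qbin_diag {a : ℤ} (ha : 0 ≤ a) : qbinZ a a = 1 := by
  rw [qbin_eq ha (le_refl a)]
  have hN : N a a.toNat = D a.toNat := by
    rw [N, D, ← Finset.prod_range_reflect (fun i => 1 - q ^ ((i:ℤ)+1)) a.toNat]
    apply Finset.prod_congr rfl
    intro i hi
    simp only [Finset.mem_range] at hi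
    congr 1
    have : ((a.toNat - 1 - i : ℕ) : ℤ) = a - 1 - i := by omega
    rw [this]; ring_nf
  rw [hN, div_self (D_ne _)]


lemma N_peel_first (a : ℤ) (m : ℕ) : N a (m+1) = N (a-1) m * (1 - q ^ a) := by
  rw [N, Finset.prod_range_succ' (fun i => 1 - q ^ (a - (i:ℤ))) m]
  simp only [Nat.cast_zero, sub_zero]
  congr 1
  apply Finset.prod_congr rfl
  intro i _
  push_cast
  ring_nf

lemma N_peel_last (a : ℤ) (m : ℕ) : N a (m+1) = N a m * (1 - q ^ (a - m)) := by
  rw [N, Finset.prod_range_succ]; rfl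

lemma D_peel_last (m : ℕ) : D (m+1) = D m * (1 - q ^ ((m:ℤ) + 1)) := by
  simp only [D, Finset.prod_range_succ]

/-- R1: `[a,b] (1-q^b) = [a-1,b-1] (1-q^a)` for `1 ≤ b ≤ a`. -/
lemma R1 {a b : ℤ} (hb : 1 ≤ b) (hba : b ≤ a) :
    qbinZ a b * (1 - q ^ b) = qbinZ (a-1) (b-1) * (1 - q ^ a) := by
  obtain ⟨m, hm⟩ : ∃ m : ℕ, b = (m : ℤ) + 1 := ⟨(b-1).toNat, by omega⟩
  subst hm
  have h1 : ((m:ℤ)+1).toNat = m + 1 := by omega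
  have h2 : ((m:ℤ)+1-1).toNat = m := by omega
  rw [qbin_eq (by omega) hba, qbin_eq (by omega) (by omega), h1, h2,
    N_peel_first, D_peel_last]
  have hd := D_ne m
  have hx := one_sub_X_pow_ne (k := (m:ℤ)+1) (by omega)
  field_simp

/-- R2: `[a,b] (1-q^(a-b)) = [a-1,b] (1-q^a)` for `1 ≤ b ≤ a-1`. -/
lemma R2 {a b : ℤ} (hb : 0 ≤ b) (hba : b ≤ a - 1) :
    qbinZ a b * (1 - q ^ (a - b)) = qbinZ (a-1) b * (1 - q ^ a) := by
  have key : N (a-1) b.toNat * (1 - q ^ a) = N a b.toNat * (1 - q ^ (a - b)) := by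
    have e1 : N a (b.toNat+1) = N (a-1) b.toNat * (1 - q ^ a) := N_peel_first a b.toNat
    have e2 : N a (b.toNat+1) = N a b.toNat * (1 - q ^ (a - b)) := by
      rw [N_peel_last, Int.toNat_of_nonneg hb]
    rw [← e1, e2]
  rw [qbin_eq (a := a) hb (by omega), qbin_eq (a := a-1) hb (by omega)]
  rw [div_mul_eq_mul_div, div_mul_eq_mul_div, key]

/-- q-Pascal I: `[a,b] = [a-1,b-1] + q^b [a-1,b]`. -/
lemma pascal1 {a b : ℤ} (hb : 1 ≤ b) (hba : b ≤ a) :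
    qbinZ a b = qbinZ (a-1) (b-1) + q ^ b * qbinZ (a-1) b := by
  rcases eq_or_lt_of_le hba with h | h
  · subst h
    have h1 : qbinZ (b-1) b = 0 := qbin_zero_of_lt (by omega)
    have h2 : qbinZ b b = 1 := qbin_diag (by omega)
    have h3 : qbinZ (b-1) (b-1) = 1 := qbin_diag (by omega)
    rw [h1, h2, h3]; ring
  · -- b ≤ a - 1
    have hv := one_sub_X_pow_ne (k := a) (by omega)
    have hA := R1 hb hba
    have hB := R2 (by omega) (by omega : b ≤ a - 1)
    have hsum : (1 - q ^ b) + q ^ b * (1 - q ^ (a - b)) = 1 - q ^ a := by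
      have : q ^ b * q ^ (a - b) = q ^ a := by
        rw [← zpow_add₀ X_ne]; congr 1; ring
      rw [mul_sub, this]; ring
    have : (qbinZ (a-1) (b-1) + q ^ b * qbinZ (a-1) b) * (1 - q ^ a)
        = qbinZ a b * (1 - q ^ a) := by
      rw [add_mul, ← hA, mul_assoc, ← hB]
      rw [← hsum]; ring
    exact (mul_right_cancel₀ hv this).symm

/-- q-Pascal II: `[a,b] = q^(a-b) [a-1,b-1] + [a-1,b]`. -/
lemma pascal2 {a b : ℤ} (hb : 1 ≤ b) (hba : b ≤ a) :
    qbinZ a b = q ^ (a - b) * qbinZ (a-1) (b-1) + qbinZ (a-1) b := by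
  rcases eq_or_lt_of_le hba with h | h
  · subst h
    have h1 : qbinZ (b-1) b = 0 := qbin_zero_of_lt (by omega)
    have h2 : qbinZ b b = 1 := qbin_diag (by omega)
    have h3 : qbinZ (b-1) (b-1) = 1 := qbin_diag (by omega)
    rw [h1, h2, h3, sub_self, zpow_zero]; ring
  · have hv := one_sub_X_pow_ne (k := a) (by omega)
    have hA := R1 hb hba
    have hB := R2 (by omega) (by omega : b ≤ a - 1)
    have hsum : q ^ (a-b) * (1 - q ^ b) + (1 - q ^ (a - b)) = 1 - q ^ a := by
      have : q ^ (a-b) * q ^ b = q ^ a := by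
        rw [← zpow_add₀ X_ne]; congr 1; ring
      rw [mul_sub, this]; ring
    have : (q ^ (a-b) * qbinZ (a-1) (b-1) + qbinZ (a-1) b) * (1 - q ^ a)
        = qbinZ a b * (1 - q ^ a) := by
      rw [add_mul, mul_assoc, ← hA, ← hB, ← hsum]; ring
    exact (mul_right_cancel₀ hv this).symm

/-- The key local identity (†). -/
lemma dagger {a b : ℤ} (ha : 0 ≤ a) (hb : 0 ≤ b) (hba : b ≤ a + 2) :
    qbinZ (a+2) b - qbinZ a (b-1)
      = q ^ b * qbinZ a b + q ^ (a + 2 - b) * qbinZ (a+1) (b-1) := by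
  rcases eq_or_lt_of_le hb with h0 | h0
  · -- b = 0
    subst h0
    have h1 : qbinZ (a+2) 0 = 1 := qbin_b_zero (by omega)
    have h2 : qbinZ a 0 = 1 := qbin_b_zero ha
    have h3 : qbinZ a (0-1) = 0 := qbin_zero_of_neg (by omega)
    have h4 : qbinZ (a+1) (0-1) = 0 := qbin_zero_of_neg (by omega)
    rw [h1, h2, h3, h4, zpow_zero]; ring
  · rcases eq_or_lt_of_le hba with h2 | h2
    · -- b = a + 2
      subst h2
      have h1 : qbinZ (a+2) (a+2) = 1 := qbin_diag (by omega)
      have h2 : qbinZ a (a+2-1) = 0 := qbin_zero_of_lt (by omega)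
      have h3 : qbinZ a (a+2) = 0 := qbin_zero_of_lt (by omega)
      have h4 : qbinZ (a+1) (a+2-1) = 1 := by
        rw [show a + 2 - 1 = a + 1 by ring]; exact qbin_diag (by omega)
      rw [h1, h2, h3, h4]
      rw [show a + 2 - (a+2) = 0 by ring, zpow_zero]; ring
    · -- 1 ≤ b ≤ a + 1
      have e1 : qbinZ (a+2) b = q ^ (a+2-b) * qbinZ (a+1) (b-1) + qbinZ (a+1) b := by
        have := pascal2 (a := a+2) (b := b) (by omega) (by omega)
        rw [show a + 2 - 1 = a + 1 by ring] at this; exact this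
      have e2 : qbinZ (a+1) b = qbinZ a (b-1) + q ^ b * qbinZ a b := by
        have := pascal1 (a := a+1) (b := b) (by omega) (by omega)
        rw [show a + 1 - 1 = a by ring] at this; exact this
      rw [e1, e2]; ring


noncomputable def Tm (n j : ℤ) : RatFunc ℚ :=
  (-1 : RatFunc ℚ) ^ j * q ^ (j * (3 * j + 1) / 2) * qbinZ (2 * n - j) (n + j)

noncomputable def Gc (n j : ℤ) : RatFunc ℚ :=
  (-1 : RatFunc ℚ) ^ (j + 1) * q ^ (n + 3 * (j * (j - 1)) / 2) * qbinZ (2 * n - 1 - j) (n + j - 1)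

lemma neg_one_ne : (-1 : RatFunc ℚ) ≠ 0 := by norm_num

lemma step (n j : ℤ) (hn : 1 ≤ n) (hj1 : -n ≤ j) (_hj2 : j ≤ n) :
    Tm n j - Tm (n-1) j = Gc n (j+1) - Gc n j := by
  obtain ⟨k, hk⟩ : ∃ k, j * (j + 1) = 2 * k := by
    rcases Int.even_mul_succ_self j with ⟨c, hc⟩
    exact ⟨c, by linarith⟩
  have e0 : j * (3 * j + 1) / 2 = k + j * j := by
    have : j * (3 * j + 1) = 2 * (k + j * j) := by linear_combination hk
    rw [this, Int.mul_ediv_cancel_left _ two_ne_zero]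
  have e1 : n + 3 * ((j+1) * ((j+1) - 1)) / 2 = n + 3 * k := by
    have : 3 * ((j+1) * ((j+1) - 1)) = 2 * (3 * k) := by linear_combination 3 * hk
    rw [this, Int.mul_ediv_cancel_left _ two_ne_zero]
  have e2 : n + 3 * (j * (j - 1)) / 2 = n + 3 * (k - j) := by
    have : 3 * (j * (j - 1)) = 2 * (3 * (k - j)) := by linear_combination 3 * hk
    rw [this, Int.mul_ediv_cancel_left _ two_ne_zero]
  simp only [Tm, Gc, e0, e1, e2]
  by_cases hc : 2 * j ≤ n
  · -- main case, via dagger with a = 2n-2-j, b = n+j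
    have hd := dagger (a := 2*n-2-j) (b := n+j) (by omega) (by omega) (by omega)
    rw [show 2*n-2-j+2 = 2*n - j by ring, show 2*n-2-j+1 = 2*n-1-j by ring] at hd
    rw [show 2*n - j - (n+j) = n - 2*j by ring] at hd
    rw [show 2*(n-1) - j = 2*n-2-j by ring, show n - 1 + j = n + j - 1 by ring,
      show 2*n-1-(j+1) = 2*n-2-j by ring, show n + (j+1) - 1 = n + j by ring]
    have hq1 : (q : RatFunc ℚ) ^ (n + 3 * k) = q ^ (k + j * j) * q ^ (n + j) := by
      rw [← zpow_add₀ X_ne]; congr 1; linear_combination -hk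
    have hq2 : (q : RatFunc ℚ) ^ (n + 3 * (k - j)) = q ^ (k + j * j) * q ^ (n - 2 * j) := by
      rw [← zpow_add₀ X_ne]; congr 1; linear_combination -hk
    have hs2 : (-1 : RatFunc ℚ) ^ (j + 1) = -((-1 : RatFunc ℚ) ^ j) := by
      rw [zpow_add₀ neg_one_ne, zpow_one]; ring
    have hs1 : (-1 : RatFunc ℚ) ^ (j + 1 + 1) = (-1 : RatFunc ℚ) ^ j := by
      rw [zpow_add₀ neg_one_ne, hs2, zpow_one]; ring
    rw [hq1, hq2, hs1, hs2]
    linear_combination ((-1 : RatFunc ℚ) ^ j * q ^ (k + j * j)) * hd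
  · -- all four Gaussian binomials vanish
    have z1 : qbinZ (2*n - j) (n + j) = 0 := qbin_zero_of_lt (by omega)
    have z2 : qbinZ (2*(n-1) - j) ((n-1) + j) = 0 := qbin_zero_of_lt (by omega)
    have z3 : qbinZ (2*n-1-(j+1)) (n+(j+1)-1) = 0 := qbin_zero_of_lt (by omega)
    have z4 : qbinZ (2*n-1-j) (n+j-1) = 0 := qbin_zero_of_lt (by omega)
    rw [z1, z2, z3, z4]
    ring

lemma tele (f : ℤ → RatFunc ℚ) (a : ℤ) (k : ℕ) :
    ∑ j ∈ Finset.Icc a (a + k - 1), (f (j+1) - f j) = f (a + k) - f a := by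
  induction k with
  | zero =>
    rw [Finset.Icc_eq_empty (by omega)]
    simp
  | succ k ih =>
    have harg : a + ((k+1 : ℕ) : ℤ) = (a + k) + 1 := by push_cast; ring
    have hIcc : Finset.Icc a (a + ((k+1 : ℕ) : ℤ) - 1) =
        insert (a + k) (Finset.Icc a (a + (k : ℤ) - 1)) := by
      ext x
      simp only [Finset.mem_Icc, Finset.mem_insert]
      omega
    rw [hIcc, Finset.sum_insert (by simp only [Finset.mem_Icc]; omega), ih, harg]
    ring

end PentAux

open PentAux in
theorem stmt2 (L : ℕ) :
    ∑ j ∈ Finset.Icc (-(L : ℤ)) (L : ℤ),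
      (-1 : RatFunc ℚ) ^ j * RatFunc.X ^ (j * (3 * j + 1) / 2) *
        qbinZ (2 * L - j) (L + j) = 1 := by
  induction L with
  | zero =>
    norm_num
    rw [show ((0:ℤ)) = 0 by rfl]
    simp [qbinZ]
  | succ L ih =>
    have hcast : ((L + 1 : ℕ) : ℤ) = (L : ℤ) + 1 := by push_cast; ring
    set n : ℤ := (L : ℤ) + 1 with hn
    have hn1 : 1 ≤ n := by omega
    have hgoal : ∑ j ∈ Finset.Icc (-(((L+1 : ℕ)) : ℤ)) ((L+1 : ℕ) : ℤ),
        (-1 : RatFunc ℚ) ^ j * RatFunc.X ^ (j * (3 * j + 1) / 2) *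
          qbinZ (2 * ((L+1:ℕ):ℤ) - j) (((L+1:ℕ):ℤ) + j)
        = ∑ j ∈ Finset.Icc (-n) n, Tm n j := by
      rw [hcast]
      simp only [Tm]
    rw [hgoal]
    have hstep : ∀ j ∈ Finset.Icc (-n) n, Tm n j = Tm (n-1) j + (Gc n (j+1) - Gc n j) := by
      intro j hj
      simp only [Finset.mem_Icc] at hj
      have := step n j hn1 hj.1 hj.2
      linear_combination this
    rw [Finset.sum_congr rfl hstep, Finset.sum_add_distrib]
    have htel : ∑ j ∈ Finset.Icc (-n) n, (Gc n (j+1) - Gc n j) = 0 := by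
      have h := tele (Gc n) (-n) (2*L+3)
      rw [show -n + ((2*L+3 : ℕ) : ℤ) - 1 = n by push_cast; omega] at h
      rw [show -n + ((2*L+3 : ℕ) : ℤ) = n + 1 by push_cast; omega] at h
      rw [h]
      have g1 : Gc n (n+1) = 0 := by
        rw [Gc, qbin_zero_of_lt (by omega)]; ring
      have g2 : Gc n (-n) = 0 := by
        rw [Gc, qbin_zero_of_neg (by omega)]; ring
      rw [g1, g2]; ring
    rw [htel, add_zero]
    have hIcc : Finset.Icc (-n) n = insert (-n) (insert n (Finset.Icc (-(L:ℤ)) (L:ℤ))) := by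
      ext x
      simp only [Finset.mem_Icc, Finset.mem_insert]
      omega
    rw [hIcc, Finset.sum_insert (by simp only [Finset.mem_insert, Finset.mem_Icc]; omega),
      Finset.sum_insert (by simp only [Finset.mem_Icc]; omega)]
    have b1 : Tm (n-1) (-n) = 0 := by
      rw [Tm, qbin_zero_of_neg (by omega)]; ring
    have b2 : Tm (n-1) n = 0 := by
      rw [Tm, qbin_zero_of_lt (by omega)]; ring
    rw [b1, b2]
    have : ∑ j ∈ Finset.Icc (-(L:ℤ)) (L:ℤ), Tm (n-1) j
        = ∑ j ∈ Finset.Icc (-(L:ℤ)) (L:ℤ),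
          (-1 : RatFunc ℚ) ^ j * RatFunc.X ^ (j * (3 * j + 1) / 2) *
            qbinZ (2 * L - j) (L + j) := by
      apply Finset.sum_congr rfl
      intro j hj
      rw [Tm, show n - 1 = (L:ℤ) by omega]
    rw [this, ih]
    ring
end

section
/- For nonnegative integers n and integers r, t with r, t ≤ n, ∑_{s=0}^{n-r} qbinom(n-r, s) · qbinom(n-s, t) · q^{C(s,2)} · (-1)^s = q^{(n-r)(n-t)} · qbinom(r, n-t), as an identity of polynomials in q. -/
open Finset

noncomputable def qN (a b : ℕ) : RatFunc ℚ := ∏ i ∈ Finset.range b, (1 - RatFunc.X ^ (a - i))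
noncomputable def qD (b : ℕ) : RatFunc ℚ := ∏ i ∈ Finset.range b, (1 - RatFunc.X ^ (i + 1))

lemma X_pow_ne_one (k : ℕ) : (RatFunc.X : RatFunc ℚ) ^ (k + 1) ≠ 1 := by
  intro h
  have h2 : (algebraMap (Polynomial ℚ) (RatFunc ℚ)) (Polynomial.X ^ (k+1)) =
      (algebraMap (Polynomial ℚ) (RatFunc ℚ)) 1 := by
    rw [map_pow, map_one, RatFunc.algebraMap_X, h]
  have h3 := RatFunc.algebraMap_injective ℚ h2
  have := congrArg Polynomial.natDegree h3
  simp [Polynomial.natDegree_X_pow] at this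
lemma one_sub_ne (k : ℕ) : (1 : RatFunc ℚ) - RatFunc.X ^ (k + 1) ≠ 0 :=
  sub_ne_zero.mpr (X_pow_ne_one k).symm

lemma qD_ne (b : ℕ) : qD b ≠ 0 :=
  Finset.prod_ne_zero_iff.mpr fun i _ => one_sub_ne i

lemma qbin_eq {a b : ℕ} (h : b ≤ a) : qbin a b = qN a b / qD b := by
  rw [qbin, if_pos h, qN, qD, Finset.prod_div_distrib]

lemma qbin_zero (a : ℕ) : qbin a 0 = 1 := by simp [qbin]

lemma qbin_of_lt {a b : ℕ} (h : a < b) : qbin a b = 0 := by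
  rw [qbin, if_neg (by omega)]

lemma qN_mul_qD {t n : ℕ} (h : t ≤ n) : qN n t * qD (n - t) = qD n := by
  induction t with
  | zero => simp [qN]
  | succ t ih =>
      have h1 : t ≤ n := by omega
      have h2 : n - t = (n - (t+1)) + 1 := by omega
      have e1 : qN n (t+1) = qN n t * (1 - RatFunc.X ^ (n - t)) := by
        rw [qN, Finset.prod_range_succ, ← qN]
      have e2 : qD (n - t) = qD (n - (t+1)) * (1 - RatFunc.X ^ (n - t)) := by
        rw [h2, qD, Finset.prod_range_succ, ← qD, ← h2]
      calc qN n (t+1) * qD (n - (t+1))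
          = qN n t * (qD (n - (t+1)) * (1 - RatFunc.X ^ (n - t))) := by rw [e1]; ring
        _ = qN n t * qD (n - t) := by rw [← e2]
        _ = qD n := ih h1

lemma qbin_self (n : ℕ) : qbin n n = 1 := by
  have := qN_mul_qD (le_refl n)
  simp only [Nat.sub_self] at this
  rw [qbin_eq (le_refl n)]
  rw [qD, Finset.range_zero, Finset.prod_empty] at this
  rw [mul_one] at this
  rw [this, div_self (qD_ne n)]

lemma qbin_symm {t n : ℕ} (h : t ≤ n) : qbin n t = qbin n (n - t) := by
  have h1 := qN_mul_qD h
  have h2 := qN_mul_qD (Nat.sub_le n t)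
  rw [Nat.sub_sub_self h] at h2
  rw [qbin_eq h, qbin_eq (Nat.sub_le n t)]
  field_simp [qD_ne]
  calc qN n t * qD (n - t) = qD n := h1
    _ = qD t * qN n (n - t) := by rw [← h2]; ring

lemma qN_succ (a b : ℕ) : qN a (b+1) = qN a b * (1 - RatFunc.X ^ (a - b)) := by
  rw [qN, Finset.prod_range_succ, ← qN]

lemma qN_succ_left (a b : ℕ) : qN (a+1) (b+1) = qN a b * (1 - RatFunc.X ^ (a + 1)) := by
  rw [qN, qN, Finset.prod_range_succ']
  simp only [Nat.succ_sub_succ, Nat.sub_zero]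

lemma qD_succ (b : ℕ) : qD (b+1) = qD b * (1 - RatFunc.X ^ (b + 1)) := by
  rw [qD, Finset.prod_range_succ, ← qD]

lemma pascal2 (a b : ℕ) : qbin (a+1) (b+1) = qbin a b + RatFunc.X ^ (b+1) * qbin a (b+1) := by
  rcases lt_trichotomy b a with h | rfl | h
  · obtain ⟨c, rfl⟩ : ∃ c, a = b + 1 + c := ⟨a - b - 1, by omega⟩
    rw [qbin_eq (by omega), qbin_eq (by omega), qbin_eq (by omega),
      qN_succ_left, qN_succ, qD_succ]
    have hab : b + 1 + c - b = c + 1 := by omega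
    have hab2 : b + 1 + c + 1 = (c + 1) + (b + 1) := by omega
    rw [hab, hab2, pow_add, ← mul_div_assoc,
      div_add_div _ _ (qD_ne b) (mul_ne_zero (qD_ne b) (one_sub_ne b)),
      div_eq_div_iff (mul_ne_zero (qD_ne b) (one_sub_ne b))
        (mul_ne_zero (qD_ne b) (mul_ne_zero (qD_ne b) (one_sub_ne b)))]
    ring
  · rw [qbin_self, qbin_self, qbin_of_lt (by omega)]; ring
  · rw [qbin_of_lt (by omega), qbin_of_lt (by omega), qbin_of_lt (by omega)]; ring

lemma pascal1 (a b : ℕ) : qbin (a+1) (b+1) = qbin a (b+1) + RatFunc.X ^ (a - b) * qbin a b := by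
  rcases lt_trichotomy b a with h | rfl | h
  · obtain ⟨c, rfl⟩ : ∃ c, a = b + 1 + c := ⟨a - b - 1, by omega⟩
    rw [qbin_eq (by omega), qbin_eq (by omega), qbin_eq (by omega),
      qN_succ_left, qN_succ, qD_succ]
    have hab : b + 1 + c - b = c + 1 := by omega
    have hab2 : b + 1 + c + 1 = (c + 1) + (b + 1) := by omega
    rw [hab, hab2, pow_add, ← mul_div_assoc,
      div_add_div _ _ (mul_ne_zero (qD_ne b) (one_sub_ne b)) (qD_ne b),
      div_eq_div_iff (mul_ne_zero (qD_ne b) (one_sub_ne b))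
        (mul_ne_zero (mul_ne_zero (qD_ne b) (one_sub_ne b)) (qD_ne b))]
    ring
  · rw [qbin_self, qbin_self, qbin_of_lt (by omega), Nat.sub_self]; ring
  · rw [qbin_of_lt (by omega), qbin_of_lt (by omega), qbin_of_lt (by omega)]; ring

lemma choose_two_succ (s : ℕ) : (s+1).choose 2 = s.choose 2 + s := by
  rw [Nat.choose_succ_succ, Nat.choose_one_right]; exact Nat.add_comm s (s.choose 2)

theorem aux : ∀ m n t : ℕ, m ≤ n → t ≤ n →
    ∑ s ∈ Finset.range (m + 1),
      qbin m s * qbin (n - s) t * RatFunc.X ^ s.choose 2 * (-1 : RatFunc ℚ) ^ s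
    = RatFunc.X ^ (m * (n - t)) * qbin (n - m) (n - t) := by
  intro m
  induction m with
  | zero =>
    intro n t _ ht
    rw [show (0:ℕ) + 1 = 1 from rfl, Finset.sum_range_one]
    rw [qbin_zero, show Nat.choose 0 2 = 0 from rfl, Nat.sub_zero, Nat.zero_mul]
    simp [qbin_symm ht]
  | succ m ih =>
    intro n t hm ht
    rcases eq_or_lt_of_le ht with rfl | ht'
    · rw [Finset.sum_eq_single 0]
      · simp [qbin_zero, qbin_self, Nat.sub_self]
      · intro s hs hs0
        have : t - s < t := by
          have := Finset.mem_range.mp hs; omega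
        simp [qbin_of_lt this]
      · intro h
        exact absurd (Finset.mem_range.mpr (by omega)) h
    · have key : ∀ s ∈ Finset.range (m+1),
          qbin (m+1) (s+1) * qbin (n-(s+1)) t * RatFunc.X ^ (s+1).choose 2 * (-1:RatFunc ℚ)^(s+1)
          = qbin m (s+1) * qbin (n-(s+1)) t * RatFunc.X ^ (s+1).choose 2 * (-1:RatFunc ℚ)^(s+1)
            - RatFunc.X ^ m *
              (qbin m s * qbin (n-1-s) t * RatFunc.X ^ s.choose 2 * (-1:RatFunc ℚ)^s) := by
        intro s hs
        have hsm : s ≤ m := by have := Finset.mem_range.mp hs; omega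
        rw [show n - (s+1) = n - 1 - s from by omega]
        have e4 : RatFunc.X ^ (m - s) * RatFunc.X ^ s = (RatFunc.X : RatFunc ℚ) ^ m := by
          rw [← pow_add]; congr 1; omega
        rw [pascal1 m s, choose_two_succ, pow_add, pow_succ]
        linear_combination
          (-(qbin m s * qbin (n-1-s) t * RatFunc.X ^ (s.choose 2) * (-1:RatFunc ℚ)^s)) * e4
      have step : (∑ s ∈ Finset.range (m+1+1),
            qbin (m+1) s * qbin (n-s) t * RatFunc.X ^ s.choose 2 * (-1:RatFunc ℚ)^s)
          = (∑ s ∈ Finset.range (m+1),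
              qbin m s * qbin (n-s) t * RatFunc.X ^ s.choose 2 * (-1:RatFunc ℚ)^s)
            - RatFunc.X ^ m * ∑ s ∈ Finset.range (m+1),
                qbin m s * qbin (n-1-s) t * RatFunc.X ^ s.choose 2 * (-1:RatFunc ℚ)^s := by
        rw [Finset.sum_range_succ' _ (m+1)]
        rw [Finset.sum_congr rfl key]
        rw [Finset.sum_sub_distrib, ← Finset.mul_sum]
        have h1 := Finset.sum_range_succ'
          (fun s => qbin m s * qbin (n-s) t * RatFunc.X ^ s.choose 2 * (-1:RatFunc ℚ)^s) (m+1)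
        have h2 := Finset.sum_range_succ
          (fun s => qbin m s * qbin (n-s) t * RatFunc.X ^ s.choose 2 * (-1:RatFunc ℚ)^s) (m+1)
        have h3 : qbin m (m+1) = 0 := qbin_of_lt (by omega)
        simp only [h3, zero_mul, add_zero] at h2
        simp only [qbin_zero, Nat.sub_zero] at h1 h2 ⊢
        rw [← h2, h1]
        ring
      rw [step, ih n t (by omega) (le_of_lt ht'), ih (n-1) t (by omega) (by omega)]
      obtain ⟨p, hp⟩ : ∃ p, n - t = p + 1 := ⟨n - t - 1, by omega⟩
      obtain ⟨q, hq⟩ : ∃ q, n - m = q + 1 := ⟨n - m - 1, by omega⟩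
      have e5 : n - 1 - t = p := by omega
      have e6 : n - 1 - m = q := by omega
      have e7 : n - (m+1) = q := by omega
      rw [hp, hq, e5, e6, e7, pascal2 q p]
      rw [show (m+1)*(p+1) = (m*(p+1)) + (p+1) by ring, pow_add,
        show m*(p+1) = m + m*p by ring, pow_add]
      ring

theorem stmt4 (n r t : ℕ) (hr : r ≤ n) (ht : t ≤ n) :
    ∑ s ∈ Finset.range (n - r + 1),
      qbin (n - r) s * qbin (n - s) t * RatFunc.X ^ s.choose 2 * (-1 : RatFunc ℚ) ^ s
    = RatFunc.X ^ ((n - r) * (n - t)) * qbin r (n - t) := by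
  have h := aux (n - r) n t (by omega) ht
  rwa [show n - (n - r) = r by omega] at h
end

section
/- Let m, n ≥ 1 with m not divisible by 3. Then ∑_{r_1,…,r_m ≤ n} ∏_{k=1}^{m} qbinom(n-r_k, r_{k+1}) q^{C(r_k,2)} (-1)^{r_k} equals (-1)^{⌊(m+n-1)m/3⌋} q^{mn(n-1)/6} if n ≢ 2 (mod 3), and equals 0 if n ≡ 2 (mod 3), where r_{m+1} := r_1. -/
set_option synthInstance.maxHeartbeats 1000000
set_option maxHeartbeats 1000000

open Finset

namespace QAux

noncomputable abbrev qq : RatFunc ℚ := RatFunc.X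

lemma one_sub_qq_pow_ne (k : ℕ) (hk : k ≠ 0) : (1 : RatFunc ℚ) - qq ^ k ≠ 0 := by
  intro h
  have hx : (RatFunc.X : RatFunc ℚ) ^ k = 1 := by linear_combination -h
  rw [← RatFunc.algebraMap_X, ← map_pow, ← map_one (algebraMap (Polynomial ℚ) (RatFunc ℚ))] at hx
  have := RatFunc.algebraMap_injective ℚ hx
  have hd := congrArg Polynomial.natDegree this
  simp [Polynomial.natDegree_X_pow] at hd
  exact hk hd

/-- q-factorial-like product ∏_{i<n} (1 - q^{i+1}). -/
noncomputable def qf (n : ℕ) : RatFunc ℚ := ∏ i ∈ range n, (1 - qq ^ (i + 1))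

lemma qf_ne_zero (n : ℕ) : qf n ≠ 0 := by
  refine Finset.prod_ne_zero_iff.mpr fun i _ => one_sub_qq_pow_ne _ (Nat.succ_ne_zero i)

lemma qf_succ (n : ℕ) : qf (n + 1) = qf n * (1 - qq ^ (n + 1)) := by
  rw [qf, Finset.prod_range_succ]; rfl

lemma qbin_eq {a b : ℕ} (h : b ≤ a) :
    qbin a b = qf a / (qf b * qf (a - b)) := by
  rw [qbin, if_pos h]
  rw [Finset.prod_div_distrib]
  have hnum : ∏ i ∈ range b, (1 - qq ^ (a - i)) = qf a / qf (a - b) := by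
    have hsplit : qf a = qf (a - b) * ∏ i ∈ range b, (1 - qq ^ (a - b + i + 1)) := by
      have h2 := Finset.prod_range_add (fun i => (1 - qq ^ (i + 1))) (a - b) b
      rw [Nat.sub_add_cancel h] at h2
      rw [qf, h2]
      rfl
    have hre : ∏ i ∈ range b, (1 - qq ^ (a - i)) =
        ∏ i ∈ range b, (1 - qq ^ (a - b + i + 1)) := by
      rw [← Finset.prod_range_reflect]
      apply Finset.prod_congr rfl
      intro i hi
      simp only [Finset.mem_range] at hi
      congr 2
      omega
    rw [hre, eq_div_iff (qf_ne_zero _), mul_comm, ← hsplit]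
  rw [hnum]
  have hb : ∏ i ∈ range b, (1 - qq ^ (i + 1)) = qf b := rfl
  rw [hb, div_div, mul_comm (qf (a-b)) (qf b)]

lemma qbin_of_lt {a b : ℕ} (h : a < b) : qbin a b = 0 := by
  rw [qbin, if_neg (by omega)]

lemma qbin_zero (a : ℕ) : qbin a 0 = 1 := by
  rw [qbin, if_pos (Nat.zero_le _)]; simp

lemma qbin_mul {a b : ℕ} (h : b ≤ a) : qbin a b * (qf b * qf (a - b)) = qf a := by
  rw [qbin_eq h]
  field_simp [qf_ne_zero]

lemma qf_zero : qf 0 = 1 := by simp [qf]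

lemma qbin_self (a : ℕ) : qbin a a = 1 := by
  rw [qbin_eq le_rfl, Nat.sub_self, qf_zero, mul_one]
  exact div_self (qf_ne_zero a)

lemma qbin_symm {a b : ℕ} (h : b ≤ a) : qbin a b = qbin a (a - b) := by
  rw [qbin_eq h, qbin_eq (Nat.sub_le a b), Nat.sub_sub_self h, mul_comm]

lemma qbin_zero_left {b : ℕ} (hb : b ≠ 0) : qbin 0 b = 0 := qbin_of_lt (by omega)

/-- Pascal, version 1 : [a+1, b+1] = [a,b] + q^{b+1} [a, b+1]. Unconditional. -/
lemma qbin_pascal1 (a b : ℕ) :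
    qbin (a + 1) (b + 1) = qbin a b + qq ^ (b + 1) * qbin a (b + 1) := by
  rcases lt_trichotomy b a with hba | rfl | hab
  · have hne : qf (b+1) * qf (a - b) ≠ 0 := mul_ne_zero (qf_ne_zero _) (qf_ne_zero _)
    apply mul_right_cancel₀ hne
    have e1 : qbin (a+1) (b+1) * (qf (b+1) * qf (a - b)) = qf (a+1) := by
      have := qbin_mul (a := a+1) (b := b+1) (by omega)
      simpa [Nat.succ_sub_succ] using this
    have e2 : qbin a b * (qf (b+1) * qf (a - b)) = (1 - qq ^ (b+1)) * qf a := by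
      rw [qf_succ b]
      calc qbin a b * (qf b * (1 - qq ^ (b+1)) * qf (a - b))
          = qbin a b * (qf b * qf (a-b)) * (1 - qq ^ (b+1)) := by ring
        _ = (1 - qq ^ (b+1)) * qf a := by rw [qbin_mul (le_of_lt hba)]; ring
    have e3 : qbin a (b+1) * (qf (b+1) * qf (a - b)) = (1 - qq ^ (a - b)) * qf a := by
      have hab1 : a - b = (a - (b+1)) + 1 := by omega
      rw [hab1, qf_succ (a - (b+1))]
      calc qbin a (b+1) * (qf (b+1) * (qf (a - (b+1)) * (1 - qq ^ (a - (b+1) + 1))))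
          = qbin a (b+1) * (qf (b+1) * qf (a - (b+1))) * (1 - qq ^ (a - (b+1) + 1)) := by ring
        _ = (1 - qq ^ (a - (b+1) + 1)) * qf a := by rw [qbin_mul hba]; ring
    rw [e1, add_mul, mul_assoc, e2, e3, qf_succ]
    have hq : qq ^ (b+1) * qq ^ (a - b) = qq ^ (a+1) := by
      rw [← pow_add]; congr 1; omega
    calc qf a * (1 - qq ^ (a+1)) = (1 - qq^(b+1)) * qf a + (qq^(b+1) - qq^(b+1) * qq^(a-b)) * qf a := by
          rw [hq]; ring
      _ = (1 - qq ^ (b+1)) * qf a + qq ^ (b+1) * ((1 - qq ^ (a - b)) * qf a) := by ring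
  · rw [qbin_self, qbin_self, qbin_of_lt (by omega), mul_zero, add_zero]
  · rw [qbin_of_lt (by omega), qbin_of_lt hab, qbin_of_lt (by omega), mul_zero, add_zero]

/-- Pascal, version 2 : [a+1, b+1] = [a,b+1] + q^{a-b} [a, b]. Unconditional. -/
lemma qbin_pascal2 (a b : ℕ) :
    qbin (a + 1) (b + 1) = qbin a (b + 1) + qq ^ (a - b) * qbin a b := by
  rcases lt_trichotomy b a with hba | rfl | hab
  · have hne : qf (b+1) * qf (a - b) ≠ 0 := mul_ne_zero (qf_ne_zero _) (qf_ne_zero _)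
    apply mul_right_cancel₀ hne
    have e1 : qbin (a+1) (b+1) * (qf (b+1) * qf (a - b)) = qf (a+1) := by
      have := qbin_mul (a := a+1) (b := b+1) (by omega)
      simpa [Nat.succ_sub_succ] using this
    have e2 : qbin a b * (qf (b+1) * qf (a - b)) = (1 - qq ^ (b+1)) * qf a := by
      rw [qf_succ b]
      calc qbin a b * (qf b * (1 - qq ^ (b+1)) * qf (a - b))
          = qbin a b * (qf b * qf (a-b)) * (1 - qq ^ (b+1)) := by ring
        _ = (1 - qq ^ (b+1)) * qf a := by rw [qbin_mul (le_of_lt hba)]; ring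
    have e3 : qbin a (b+1) * (qf (b+1) * qf (a - b)) = (1 - qq ^ (a - b)) * qf a := by
      have hab1 : a - b = (a - (b+1)) + 1 := by omega
      rw [hab1, qf_succ (a - (b+1))]
      calc qbin a (b+1) * (qf (b+1) * (qf (a - (b+1)) * (1 - qq ^ (a - (b+1) + 1))))
          = qbin a (b+1) * (qf (b+1) * qf (a - (b+1))) * (1 - qq ^ (a - (b+1) + 1)) := by ring
        _ = (1 - qq ^ (a - (b+1) + 1)) * qf a := by rw [qbin_mul hba]; ring
    rw [e1, add_mul, mul_assoc, e2, e3, qf_succ]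
    have hq : qq ^ (a - b) * qq ^ (b+1) = qq ^ (a+1) := by
      rw [← pow_add]; congr 1; omega
    calc qf a * (1 - qq ^ (a+1)) = (1 - qq^(a-b)) * qf a + (qq^(a-b) - qq^(a-b) * qq^(b+1)) * qf a := by
          rw [hq]; ring
      _ = (1 - qq ^ (a - b)) * qf a + qq ^ (a - b) * ((1 - qq ^ (b+1)) * qf a) := by ring
  · rw [qbin_self, qbin_self, qbin_of_lt (by omega), Nat.sub_self, pow_zero, one_mul, zero_add]
  · rw [qbin_of_lt (by omega), qbin_of_lt hab, qbin_of_lt (by omega), mul_zero, add_zero]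

/-- subset-of-subset : [r,v][v,t] = [r,t][r-t, v-t] for t ≤ v. -/
lemma qbin_subset {r v t : ℕ} (h : t ≤ v) :
    qbin r v * qbin v t = qbin r t * qbin (r - t) (v - t) := by
  rcases le_or_gt v r with hvr | hvr
  · have htr : t ≤ r := le_trans h hvr
    rw [qbin_eq hvr, qbin_eq h, qbin_eq htr, qbin_eq (by omega : v - t ≤ r - t)]
    have h2 : r - t - (v - t) = r - v := by omega
    rw [h2]
    field_simp [qf_ne_zero]
  · rw [qbin_of_lt hvr]
    rcases le_or_gt t r with htr | htr
    · rw [qbin_of_lt (by omega : r - t < v - t), mul_zero, zero_mul]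
    · rw [qbin_of_lt htr, zero_mul, zero_mul]

end QAux

namespace QAux

local notation "K" => RatFunc ℚ

lemma choose2_succ (s : ℕ) : (s+1).choose 2 = s.choose 2 + s := by
  rw [Nat.choose_succ_succ]
  simp [Nat.choose_one_right, Nat.add_comm]

lemma neg_one_pow_sub {a b : ℕ} (h : b ≤ a) :
    ((-1 : K)) ^ (a - b) = (-1) ^ a * (-1) ^ b := by
  obtain ⟨c, rfl⟩ := Nat.exists_eq_add_of_le h
  rw [Nat.add_sub_cancel_left, pow_add]
  have hb : (-1 : K) ^ b * (-1 : K) ^ b = 1 := by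
    rw [← pow_add, ← two_mul, pow_mul]; norm_num
  linear_combination (-((-1 : K) ^ c)) * hb

/-- Key single-sum identity I1. -/
lemma I1 (j : ℕ) : ∀ n u : ℕ, j ≤ n → u ≤ n →
    ∑ s ∈ range (n+1), ((-1 : K) ^ s * qq ^ (s.choose 2) * qbin j s * qbin (n - s) u)
      = qq ^ (j * (n - u)) * qbin (n - j) (n - u) := by
  induction j with
  | zero =>
    intro n u _ hu
    rw [Finset.sum_eq_single 0]
    · simp [qbin_zero, ← qbin_symm hu]
    · intro s _ hs
      rw [qbin_of_lt (by omega), mul_zero, zero_mul]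
    · intro h; simp at h
  | succ j IH =>
    intro n u hj hu
    rw [Finset.sum_range_succ']
    have hsplit : ∀ s : ℕ,
        (-1 : K) ^ (s+1) * qq ^ ((s+1).choose 2) * qbin (j+1) (s+1) * qbin (n - (s+1)) u
        = (-1 : K) ^ (s+1) * qq ^ ((s+1).choose 2) * qbin j (s+1) * qbin (n - (s+1)) u
          + (-(qq ^ j)) * ((-1 : K) ^ s * qq ^ (s.choose 2) * qbin j s * qbin ((n-1) - s) u) := by
      intro s
      rw [qbin_pascal2 j s]
      have hn1 : n - (s+1) = (n-1) - s := by omega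
      rcases le_or_gt s j with hsj | hsj
      · have he : (s+1).choose 2 + (j - s) = s.choose 2 + j := by
          rw [choose2_succ]; omega
        have : qq ^ ((s+1).choose 2) * qq ^ (j - s) = qq ^ (s.choose 2) * qq ^ j := by
          rw [← pow_add, ← pow_add, he]
        rw [hn1]
        calc (-1:K)^(s+1) * qq^((s+1).choose 2) * (qbin j (s+1) + qq^(j-s) * qbin j s) * qbin ((n-1)-s) u
            = (-1:K)^(s+1) * qq^((s+1).choose 2) * qbin j (s+1) * qbin ((n-1)-s) u
              + (-1:K)^(s+1) * (qq^((s+1).choose 2) * qq^(j-s)) * qbin j s * qbin ((n-1)-s) u := by ring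
          _ = _ := by rw [this, pow_succ]; ring
      · rw [qbin_of_lt hsj, qbin_of_lt (by omega : j < s + 1)]
        rw [hn1]; ring
    rw [Finset.sum_congr rfl (fun s _ => hsplit s), Finset.sum_add_distrib]
    rw [← Finset.mul_sum]
    -- first double piece reassembles to I1 at (n, u)
    have hA : (∑ s ∈ range n, (-1:K)^(s+1) * qq^((s+1).choose 2) * qbin j (s+1) * qbin (n-(s+1)) u)
        + (-1:K)^0 * qq^((0:ℕ).choose 2) * qbin (j+1) 0 * qbin (n-0) u
        = qq ^ (j * (n - u)) * qbin (n - j) (n - u) := by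
      have h0 : ((-1:K)^0 * qq^((0:ℕ).choose 2) * qbin (j+1) 0 * qbin (n-0) u)
          = ((-1:K)^0 * qq^((0:ℕ).choose 2) * qbin j 0 * qbin (n-0) u) := by
        rw [qbin_zero, qbin_zero]
      rw [h0]
      have hIH := IH n u (by omega) hu
      rw [Finset.sum_range_succ'] at hIH
      exact hIH
    rw [add_right_comm, hA]
    rcases Nat.lt_or_ge u n with hun | hun
    · -- u ≤ n - 1
      have hB : (∑ s ∈ range n, (-1:K)^s * qq^(s.choose 2) * qbin j s * qbin ((n-1)-s) u)
          = qq ^ (j * ((n-1) - u)) * qbin ((n-1) - j) ((n-1) - u) := by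
        have := IH (n-1) u (by omega) (by omega)
        rwa [(by omega : n - 1 + 1 = n)] at this
      rw [hB]
      obtain ⟨d, hd⟩ : ∃ d, n - u = d + 1 := ⟨n - u - 1, by omega⟩
      obtain ⟨e, he⟩ : ∃ e, n - j = e + 1 := ⟨n - j - 1, by omega⟩
      have h1 : (n-1) - u = d := by omega
      have h2 : (n-1) - j = e := by omega
      have h3 : n - (j+1) = e := by omega
      rw [hd, he, h1, h2, h3, qbin_pascal1 e d]
      have h4 : j * (d+1) = j * d + j := by ring
      have h5 : (j+1) * (d+1) = (j * d + j) + (d + 1) := by ring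
      rw [h4, h5, pow_add, pow_add]
      ring
    · -- u = n
      have hu' : u = n := le_antisymm hu hun
      subst hu'
      have hB0 : (∑ s ∈ range u, (-1:K)^s * qq^(s.choose 2) * qbin j s * qbin ((u-1)-s) u) = 0 := by
        apply Finset.sum_eq_zero
        intro s _
        rw [qbin_of_lt (show u - 1 - s < u by omega), mul_zero]
      rw [hB0, mul_zero, add_zero, Nat.sub_self]
      simp [qbin_zero]

end QAux

namespace QAux

local notation "K" => RatFunc ℚ

lemma telescope (a' N : ℕ) (E : ℕ → ℕ) (hN : a' < N)
    (hE : ∀ w, w < a' + 1 → E (w+1) + (a' - w) = E w) :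
    ∑ w ∈ range (N+1), ((-1:K)^w * qq^(E w) * qbin (a'+1) w) = 0 := by
  have key : ∀ w, (-1:K)^(w+1) * qq^(E (w+1)) * qbin (a'+1) (w+1)
      = ((-1:K)^(w+1) * qq^(E (w+1)) * qbin a' (w+1)) - ((-1:K)^w * qq^(E w) * qbin a' w) := by
    intro w
    rw [qbin_pascal2 a' w]
    rcases le_or_gt w a' with hw | hw
    · have h1 : qq^(E (w+1)) * qq^(a' - w) = qq^(E w) := by
        rw [← pow_add, hE w (by omega)]
      calc (-1:K)^(w+1) * qq^(E (w+1)) * (qbin a' (w+1) + qq^(a'-w) * qbin a' w)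
          = (-1:K)^(w+1) * qq^(E (w+1)) * qbin a' (w+1)
            + (-1:K)^(w+1) * (qq^(E (w+1)) * qq^(a'-w)) * qbin a' w := by ring
        _ = _ := by rw [h1, pow_succ]; ring
    · rw [qbin_of_lt (show a' < w + 1 by omega), qbin_of_lt hw]
      ring
  rw [Finset.sum_range_succ']
  rw [Finset.sum_congr rfl (fun w _ => key w)]
  rw [Finset.sum_range_sub (fun w => (-1:K)^w * qq^(E w) * qbin a' w) N]
  rw [qbin_of_lt hN, qbin_zero, qbin_zero]
  ring

/-- Key single-sum identity I2 (orthogonality-type). -/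
lemma I2 (n r t : ℕ) (hr : r ≤ n) (ht : t ≤ n) :
    ∑ u ∈ range (n+1), ((-1:K)^u * qq^(u.choose 2 + (n-r)*(n-u)) * (qbin r (n-u) * qbin (n-u) t))
    = if r = t then (-1:K)^(n+t) * qq^((n-t).choose 2 + (n-t)*t) else 0 := by
  have hrefl := Finset.sum_range_reflect
    (fun u => (-1:K)^u * qq^(u.choose 2 + (n-r)*(n-u)) * (qbin r (n-u) * qbin (n-u) t)) (n+1)
  rw [← hrefl]
  simp only [Nat.add_sub_cancel]
  have hterm : ∀ v ∈ range (n+1),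
      (-1:K)^(n-v) * qq^((n-v).choose 2 + (n-r)*(n-(n-v))) * (qbin r (n-(n-v)) * qbin (n-(n-v)) t)
      = (-1:K)^(n-v) * qq^((n-v).choose 2 + (n-r)*v) * (qbin r v * qbin v t) := by
    intro v hv
    simp only [Finset.mem_range] at hv
    rw [Nat.sub_sub_self (by omega : v ≤ n)]
  rw [Finset.sum_congr rfl hterm]
  rcases lt_or_ge r t with hrt | htr
  · rw [if_neg (by omega)]
    apply Finset.sum_eq_zero
    intro v _
    rcases le_or_gt t v with h | h
    · rw [qbin_of_lt (show r < v by omega), zero_mul, mul_zero]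
    · rw [qbin_of_lt h, mul_zero, mul_zero]
  · -- t ≤ r
    have hsplit : ∑ v ∈ range (n+1),
        ((-1:K)^(n-v) * qq^((n-v).choose 2 + (n-r)*v) * (qbin r v * qbin v t))
        = ∑ w ∈ range (n+1-t),
        ((-1:K)^(n-(t+w)) * qq^((n-(t+w)).choose 2 + (n-r)*(t+w)) * (qbin r (t+w) * qbin (t+w) t)) := by
      rw [Finset.range_eq_Ico, ← Finset.sum_Ico_consecutive _ (Nat.zero_le t) (by omega : t ≤ n+1)]
      have hzero : ∑ v ∈ Finset.Ico 0 t,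
          ((-1:K)^(n-v) * qq^((n-v).choose 2 + (n-r)*v) * (qbin r v * qbin v t)) = 0 := by
        apply Finset.sum_eq_zero
        intro v hv
        simp only [Finset.mem_Ico] at hv
        rw [qbin_of_lt hv.2, mul_zero, mul_zero]
      rw [hzero, zero_add, Finset.sum_Ico_eq_sum_range, Finset.range_eq_Ico]
    rw [hsplit]
    have hterm2 : ∀ w ∈ range (n+1-t),
        ((-1:K)^(n-(t+w)) * qq^((n-(t+w)).choose 2 + (n-r)*(t+w)) * (qbin r (t+w) * qbin (t+w) t))
        = ((-1:K)^(n+t) * qbin r t) *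
          ((-1:K)^w * qq^((n-t-w).choose 2 + (n-r)*(t+w)) * qbin (r-t) w) := by
      intro w hw
      simp only [Finset.mem_range] at hw
      have htw : t + w ≤ n := by omega
      rw [qbin_subset (show t ≤ t + w by omega), Nat.add_sub_cancel_left]
      rw [neg_one_pow_sub htw, pow_add, show n - (t+w) = n - t - w by omega]
      ring
    rw [Finset.sum_congr rfl hterm2, ← Finset.mul_sum]
    rcases eq_or_lt_of_le htr with rfl | hrt
    · -- r = t
      rw [if_pos rfl, Nat.sub_self]
      rw [Finset.sum_eq_single 0]
      · rw [qbin_self, qbin_zero]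
        simp only [pow_zero, Nat.sub_zero, Nat.add_zero, mul_one, one_mul]
      · intro w _ hw
        rw [qbin_of_lt (by omega), mul_zero]
      · intro h
        exfalso
        simp only [Finset.mem_range] at h
        omega
    · -- t < r
      rw [if_neg (by omega)]
      have hN : n + 1 - t = (n - t) + 1 := by omega
      have ha : r - t = (r - t - 1) + 1 := by omega
      rw [hN]
      have htel := telescope (r - t - 1) (n - t) (fun w => (n-t-w).choose 2 + (n-r)*(t+w))
        (by omega)
        (by
          intro w hwlt
          show ((n-t-(w+1)).choose 2 + (n-r)*(t+(w+1))) + ((r-t-1) - w)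
              = (n-t-w).choose 2 + (n-r)*(t+w)
          obtain ⟨c, hc⟩ : ∃ c, r = t + w + 1 + c := ⟨r - t - w - 1, by omega⟩
          obtain ⟨d, hd⟩ : ∃ d, n = r + d := ⟨n - r, by omega⟩
          have e1 : n - t - (w+1) = c + d := by omega
          have e2 : n - t - w = (c + d) + 1 := by omega
          have e3 : r - t - 1 - w = c := by omega
          have e4 : n - r = d := by omega
          rw [e1, e2, e3, e4, choose2_succ (c+d)]
          have e5 : d * (t + (w+1)) = d * (t+w) + d := by ring
          rw [e5]
          omega)
      rw [← ha] at htel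
      rw [htel, mul_zero]

end QAux

namespace QAux

local notation "K" => RatFunc ℚ

lemma choose2_add (a b : ℕ) : (a+b).choose 2 = a.choose 2 + b.choose 2 + a*b := by
  induction b with
  | zero => simp
  | succ b ih =>
    have h1 : a + (b+1) = (a+b) + 1 := by ring
    rw [h1, choose2_succ, ih, choose2_succ]
    have h2 : a * (b+1) = a*b + a := by ring
    omega

lemma choose2_split {t n : ℕ} (h : t ≤ n) :
    t.choose 2 + ((n-t).choose 2 + (n-t)*t) = n.choose 2 := by
  obtain ⟨b, rfl⟩ := Nat.exists_eq_add_of_le h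
  rw [Nat.add_sub_cancel_left, choose2_add]
  have : b * t = t * b := by ring
  omega

lemma neg_one_pow_mul_self (b : ℕ) : ((-1:K))^b * (-1:K)^b = 1 := by
  rw [← pow_add, ← two_mul, pow_mul]; norm_num

/-- The transfer matrix. -/
noncomputable def Mq (n : ℕ) : Matrix (Fin (n+1)) (Fin (n+1)) K :=
  Matrix.of fun r s =>
    qbin (n - (r:ℕ)) (s:ℕ) * qq ^ ((r:ℕ).choose 2) * (-1:K) ^ (r:ℕ)

lemma Mq_sq (n : ℕ) (r u : Fin (n+1)) :
    (Mq n * Mq n) r u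
      = qbin (r:ℕ) (n-(u:ℕ)) * qq ^ ((r:ℕ).choose 2 + (n-(r:ℕ))*(n-(u:ℕ))) * (-1:K)^(r:ℕ) := by
  rw [Matrix.mul_apply]
  have hstep : ∀ s : Fin (n+1), Mq n r s * Mq n s u
      = (qq ^ ((r:ℕ).choose 2) * (-1:K)^(r:ℕ)) *
        ((-1:K)^(s:ℕ) * qq ^ ((s:ℕ).choose 2) * qbin (n-(r:ℕ)) (s:ℕ) * qbin (n-(s:ℕ)) (u:ℕ)) := by
    intro s; simp only [Mq, Matrix.of_apply]; ring
  rw [Finset.sum_congr rfl (fun s _ => hstep s), ← Finset.mul_sum]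
  rw [Fin.sum_univ_eq_sum_range
    (fun s => (-1:K)^s * qq ^ (s.choose 2) * qbin (n-(r:ℕ)) s * qbin (n-s) (u:ℕ)) (n+1)]
  rw [I1 (n-(r:ℕ)) n (u:ℕ) (Nat.sub_le n _) (by omega : (u:ℕ) ≤ n)]
  rw [Nat.sub_sub_self (by omega : (r:ℕ) ≤ n), pow_add]
  ring

lemma Mq_cube (n : ℕ) :
    (Mq n) ^ 3 = ((-1:K)^n * qq^(n.choose 2)) • (1 : Matrix (Fin (n+1)) (Fin (n+1)) K) := by
  have h3 : (Mq n) ^ 3 = (Mq n * Mq n) * Mq n := by rw [pow_succ, pow_two]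
  rw [h3]
  ext r t
  rw [Matrix.mul_apply]
  have hstep : ∀ u : Fin (n+1), (Mq n * Mq n) r u * Mq n u t
      = (qq ^ ((r:ℕ).choose 2) * (-1:K)^(r:ℕ)) *
        ((-1:K)^(u:ℕ) * qq ^ ((u:ℕ).choose 2 + (n-(r:ℕ))*(n-(u:ℕ))) *
          (qbin (r:ℕ) (n-(u:ℕ)) * qbin (n-(u:ℕ)) (t:ℕ))) := by
    intro u
    rw [Mq_sq]
    simp only [Mq, Matrix.of_apply]
    rw [pow_add]
    ring
  rw [Finset.sum_congr rfl (fun u _ => hstep u), ← Finset.mul_sum]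
  rw [Fin.sum_univ_eq_sum_range
    (fun u => (-1:K)^u * qq ^ (u.choose 2 + (n-(r:ℕ))*(n-u)) *
      (qbin (r:ℕ) (n-u) * qbin (n-u) (t:ℕ))) (n+1)]
  rw [I2 n (r:ℕ) (t:ℕ) (by omega : (r:ℕ) ≤ n) (by omega : (t:ℕ) ≤ n)]
  rw [Matrix.smul_apply, Matrix.one_apply]
  rcases eq_or_ne r t with rfl | hne
  · rw [if_pos rfl, if_pos rfl, smul_eq_mul, mul_one]
    have hsign : (-1:K)^(r:ℕ) * (-1:K)^(n+(r:ℕ)) = (-1:K)^n := by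
      rw [pow_add]
      calc (-1:K)^(r:ℕ) * ((-1:K)^n * (-1:K)^(r:ℕ))
          = (-1:K)^n * ((-1:K)^(r:ℕ) * (-1:K)^(r:ℕ)) := by ring
        _ = (-1:K)^n := by rw [neg_one_pow_mul_self, mul_one]
    calc qq ^ ((r:ℕ).choose 2) * (-1:K)^(r:ℕ) *
          ((-1:K)^(n+(r:ℕ)) * qq^((n-(r:ℕ)).choose 2 + (n-(r:ℕ))*(r:ℕ)))
        = ((-1:K)^(r:ℕ) * (-1:K)^(n+(r:ℕ))) *
          (qq ^ ((r:ℕ).choose 2) * qq^((n-(r:ℕ)).choose 2 + (n-(r:ℕ))*(r:ℕ))) := by ring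
      _ = (-1:K)^n * qq^(n.choose 2) := by
          rw [hsign, ← pow_add, choose2_split (by omega : (r:ℕ) ≤ n)]
  · rw [if_neg (fun h => hne (Fin.val_injective h)), if_neg hne, mul_zero]
    simp

end QAux

namespace QAux

section TracePath

variable {R : Type*} [CommRing R] {N : ℕ}

lemma pow_apply_path (A : Matrix (Fin N) (Fin N) R) :
    ∀ (m : ℕ) (i j : Fin N), (A ^ (m+1)) i j
      = ∑ c : Fin m → Fin N,
          (∏ k : Fin m, A (Fin.cons (α := fun _ => Fin N) i c k.castSucc)
              (Fin.cons (α := fun _ => Fin N) i c k.succ))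
            * A (Fin.cons (α := fun _ => Fin N) i c (Fin.last m)) j := by
  intro m
  induction m with
  | zero =>
    intro i j
    rw [pow_one]
    haveI : Unique (Fin 0 → Fin N) := ⟨⟨Fin.elim0⟩, fun c => funext fun k => k.elim0⟩
    rw [Fintype.sum_unique]
    simp
  | succ m IH =>
    intro i j
    rw [pow_succ, Matrix.mul_apply]
    have hx : ∀ x : Fin N, (A ^ (m+1)) i x * A x j
        = ∑ c : Fin m → Fin N,
          (((∏ k : Fin m, A (Fin.cons (α := fun _ => Fin N) i c k.castSucc)
              (Fin.cons (α := fun _ => Fin N) i c k.succ))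
            * A (Fin.cons (α := fun _ => Fin N) i c (Fin.last m)) x) * A x j) := by
      intro x
      rw [IH i x, Finset.sum_mul]
    rw [Finset.sum_congr rfl (fun x _ => hx x)]
    rw [← Equiv.sum_comp (Fin.snocEquiv (fun _ => Fin N))
      (fun c' => (∏ k : Fin (m+1), A (Fin.cons (α := fun _ => Fin N) i c' k.castSucc)
              (Fin.cons (α := fun _ => Fin N) i c' k.succ))
            * A (Fin.cons (α := fun _ => Fin N) i c' (Fin.last (m+1))) j)]
    rw [Fintype.sum_prod_type]
    apply Finset.sum_congr rfl
    intro x _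
    apply Finset.sum_congr rfl
    intro c _
    have hsnoc : ((Fin.snocEquiv (fun _ => Fin N)) (x, c)) = Fin.snoc c x := rfl
    rw [hsnoc, Fin.cons_snoc_eq_snoc_cons]
    set d : Fin (m+1) → Fin N := Fin.cons (α := fun _ => Fin N) i c with hd
    have h1 : Fin.snoc (α := fun _ => Fin N) d x (Fin.last (m+1)) = x := Fin.snoc_last _ _
    have hprod : (∏ k : Fin (m+1), A (Fin.snoc (α := fun _ => Fin N) d x k.castSucc)
          (Fin.snoc (α := fun _ => Fin N) d x k.succ))
        = (∏ k : Fin m, A (d k.castSucc) (d k.succ)) * A (d (Fin.last m)) x := by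
      rw [Fin.prod_univ_castSucc]
      congr 1
      · apply Finset.prod_congr rfl
        intro k _
        rw [Fin.snoc_castSucc, Fin.succ_castSucc, Fin.snoc_castSucc]
      · rw [Fin.snoc_castSucc, Fin.succ_last, Fin.snoc_last]
    rw [hprod, h1]

lemma trace_pow_cyclic (A : Matrix (Fin N) (Fin N) R) (m : ℕ) (hm : 0 < m) :
    Matrix.trace (A ^ m)
    = ∑ r : Fin m → Fin N, ∏ k : Fin m,
        A (r k) (r ⟨((k:ℕ)+1) % m, Nat.mod_lt _ hm⟩) := by
  obtain ⟨m', rfl⟩ : ∃ m', m = m'+1 := ⟨m-1, by omega⟩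
  have htr : Matrix.trace (A ^ (m'+1)) = ∑ i : Fin N, (A ^ (m'+1)) i i := rfl
  rw [htr, Finset.sum_congr rfl (fun i _ => pow_apply_path A m' i i)]
  rw [← Equiv.sum_comp (Fin.consEquiv (fun _ => Fin N))
    (fun r => ∏ k : Fin (m'+1), A (r k) (r ⟨((k:ℕ)+1) % (m'+1), Nat.mod_lt _ hm⟩))]
  rw [Fintype.sum_prod_type]
  apply Finset.sum_congr rfl
  intro i _
  apply Finset.sum_congr rfl
  intro c _
  have hcons : ((Fin.consEquiv (fun _ => Fin N)) (i, c)) = Fin.cons i c := rfl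
  rw [hcons]
  set d : Fin (m'+1) → Fin N := Fin.cons (α := fun _ => Fin N) i c with hd
  rw [Fin.prod_univ_castSucc]
  have hcyc1 : ∀ k : Fin m',
      (⟨((k.castSucc : ℕ)+1) % (m'+1), Nat.mod_lt _ hm⟩ : Fin (m'+1)) = k.succ := by
    intro k
    apply Fin.ext
    simp only [Fin.coe_castSucc, Fin.val_succ]
    exact Nat.mod_eq_of_lt (by omega)
  have hcyc2 : (⟨(((Fin.last m') : ℕ)+1) % (m'+1), Nat.mod_lt _ hm⟩ : Fin (m'+1)) = 0 := by
    apply Fin.ext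
    simp [Fin.val_last, Nat.mod_self]
  have h0 : d 0 = i := rfl
  congr 1
  · apply Finset.prod_congr rfl
    intro k _
    rw [hcyc1 k]
  · rw [hcyc2, h0]

end TracePath

end QAux

namespace QAux

local notation "K" => RatFunc ℚ

/-- S-family: `S k n = ∑_r (-1)^r q^{C(r,2)+k r} [n-r, r]`. -/
noncomputable def Sq (k n : ℕ) : K :=
  ∑ r ∈ range (n+1), (-1:K)^r * qq^(r.choose 2 + k*r) * qbin (n-r) r

/-- V-family: `V k n = ∑_w (-1)^w q^{C(n-w,2)+w²+k w} [n-w, w]`. -/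
noncomputable def Vq (k n : ℕ) : K :=
  ∑ w ∈ range (n+1), (-1:K)^w * qq^((n-w).choose 2 + w*w + k*w) * qbin (n-w) w

lemma Sq_A (k n : ℕ) : Sq k (n+2) = Sq (k+1) (n+1) - qq^k * Sq (k+1) n := by
  have hsplit : ∀ r, (-1:K)^(r+1) * qq^((r+1).choose 2 + k*(r+1)) * qbin (n+2-(r+1)) (r+1)
      = (-1:K)^(r+1) * qq^((r+1).choose 2 + (k+1)*(r+1)) * qbin (n+1-(r+1)) (r+1)
        + (-(qq^k)) * ((-1:K)^r * qq^(r.choose 2 + (k+1)*r) * qbin (n-r) r) := by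
    intro r
    have h1 : n + 2 - (r+1) = n + 1 - r := by omega
    have h2 : n + 1 - (r+1) = n - r := by omega
    rw [h1, h2]
    rcases le_or_gt r n with hr | hr
    · have h3 : n + 1 - r = (n - r) + 1 := by omega
      rw [h3, qbin_pascal1 (n-r) r]
      have e1 : (r+1).choose 2 + k*(r+1) + (r+1) = (r+1).choose 2 + (k+1)*(r+1) := by ring
      have e2 : (r+1).choose 2 + k*(r+1) = (r.choose 2 + (k+1)*r) + k := by
        rw [choose2_succ]; ring
      calc (-1:K)^(r+1) * qq^((r+1).choose 2 + k*(r+1)) * (qbin (n-r) r + qq^(r+1) * qbin (n-r) (r+1))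
          = (-1:K)^(r+1) * (qq^((r+1).choose 2 + k*(r+1)) * qq^(r+1)) * qbin (n-r) (r+1)
            + (-1:K)^(r+1) * qq^((r+1).choose 2 + k*(r+1)) * qbin (n-r) r := by ring
        _ = _ := by
            rw [← pow_add, e1, e2, pow_add, pow_succ]
            ring
    · have hz1 : qbin (n+1-r) (r+1) = 0 := qbin_of_lt (by omega)
      have hz2 : qbin (n-r) (r+1) = 0 := qbin_of_lt (by omega)
      have hz3 : qbin (n-r) r = 0 := qbin_of_lt (by omega)
      rw [hz1, hz2, hz3]
      ring
  rw [Sq, Finset.sum_range_succ']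
  rw [Finset.sum_congr rfl (fun r _ => hsplit r), Finset.sum_add_distrib]
  have hP1 : ∑ r ∈ range (n+2),
      ((-1:K)^(r+1) * qq^((r+1).choose 2 + (k+1)*(r+1)) * qbin (n+1-(r+1)) (r+1))
      = Sq (k+1) (n+1)
        - (-1:K)^0 * qq^((0:ℕ).choose 2 + (k+1)*0) * qbin (n+1-0) 0 := by
    rw [eq_sub_iff_add_eq]
    rw [Finset.sum_range_succ
      (fun r => (-1:K)^(r+1) * qq^((r+1).choose 2 + (k+1)*(r+1)) * qbin (n+1-(r+1)) (r+1)) (n+1)]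
    rw [qbin_of_lt (show n+1-(n+1+1) < n+1+1 by omega), mul_zero, add_zero]
    rw [Sq]
    exact (Finset.sum_range_succ'
      (fun r => (-1:K)^r * qq^(r.choose 2 + (k+1)*r) * qbin (n+1-r) r) (n+1)).symm
  have hP2 : ∑ r ∈ range (n+2),
      ((-(qq^k)) * ((-1:K)^r * qq^(r.choose 2 + (k+1)*r) * qbin (n-r) r))
      = -(qq^k) * Sq (k+1) n := by
    rw [← Finset.mul_sum]
    congr 1
    rw [Sq, Finset.sum_range_succ
      (fun r => (-1:K)^r * qq^(r.choose 2 + (k+1)*r) * qbin (n-r) r) (n+1)]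
    rw [qbin_of_lt (show n-(n+1) < n+1 by omega), mul_zero, add_zero]
  rw [hP1, hP2]
  rw [qbin_zero, qbin_zero]
  ring

lemma Sq_B (k n : ℕ) : Sq (k+1) (n+2) = Sq (k+1) (n+1) - qq^(n+k+1) * Sq k n := by
  have hsplit : ∀ r, (-1:K)^(r+1) * qq^((r+1).choose 2 + (k+1)*(r+1)) * qbin (n+2-(r+1)) (r+1)
      = (-1:K)^(r+1) * qq^((r+1).choose 2 + (k+1)*(r+1)) * qbin (n+1-(r+1)) (r+1)
        + (-(qq^(n+k+1))) * ((-1:K)^r * qq^(r.choose 2 + k*r) * qbin (n-r) r) := by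
    intro r
    have h1 : n + 2 - (r+1) = n + 1 - r := by omega
    have h2 : n + 1 - (r+1) = n - r := by omega
    rw [h1, h2]
    rcases le_or_gt r n with hr | hr
    · have h3 : n + 1 - r = (n - r) + 1 := by omega
      rw [h3, qbin_pascal2 (n-r) r]
      rcases le_or_gt (2*r) n with h2r | h2r
      · have e1 : ((r+1).choose 2 + (k+1)*(r+1)) + (n - r - r) = (r.choose 2 + k*r) + (n+k+1) := by
          rw [choose2_succ]
          have : (k+1)*(r+1) = k*r + k + r + 1 := by ring
          omega
        calc (-1:K)^(r+1) * qq^((r+1).choose 2 + (k+1)*(r+1))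
              * (qbin (n-r) (r+1) + qq^(n-r-r) * qbin (n-r) r)
            = (-1:K)^(r+1) * qq^((r+1).choose 2 + (k+1)*(r+1)) * qbin (n-r) (r+1)
              + (-1:K)^(r+1) * (qq^((r+1).choose 2 + (k+1)*(r+1)) * qq^(n-r-r)) * qbin (n-r) r := by ring
          _ = _ := by
            rw [← pow_add, e1, pow_add, pow_succ]
            ring
      · have hz : qbin (n-r) r = 0 := qbin_of_lt (by omega)
        rw [hz]
        ring
    · have hz1 : qbin (n+1-r) (r+1) = 0 := qbin_of_lt (by omega)
      have hz2 : qbin (n-r) (r+1) = 0 := qbin_of_lt (by omega)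
      have hz3 : qbin (n-r) r = 0 := qbin_of_lt (by omega)
      rw [hz1, hz2, hz3]
      ring
  rw [Sq, Finset.sum_range_succ']
  rw [Finset.sum_congr rfl (fun r _ => hsplit r), Finset.sum_add_distrib]
  have hP1 : ∑ r ∈ range (n+2),
      ((-1:K)^(r+1) * qq^((r+1).choose 2 + (k+1)*(r+1)) * qbin (n+1-(r+1)) (r+1))
      = Sq (k+1) (n+1)
        - (-1:K)^0 * qq^((0:ℕ).choose 2 + (k+1)*0) * qbin (n+1-0) 0 := by
    rw [eq_sub_iff_add_eq]
    rw [Finset.sum_range_succ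
      (fun r => (-1:K)^(r+1) * qq^((r+1).choose 2 + (k+1)*(r+1)) * qbin (n+1-(r+1)) (r+1)) (n+1)]
    rw [qbin_of_lt (show n+1-(n+1+1) < n+1+1 by omega), mul_zero, add_zero]
    rw [Sq]
    exact (Finset.sum_range_succ'
      (fun r => (-1:K)^r * qq^(r.choose 2 + (k+1)*r) * qbin (n+1-r) r) (n+1)).symm
  have hP2 : ∑ r ∈ range (n+2),
      ((-(qq^(n+k+1))) * ((-1:K)^r * qq^(r.choose 2 + k*r) * qbin (n-r) r))
      = -(qq^(n+k+1)) * Sq k n := by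
    rw [← Finset.mul_sum]
    congr 1
    rw [Sq, Finset.sum_range_succ
      (fun r => (-1:K)^r * qq^(r.choose 2 + k*r) * qbin (n-r) r) (n+1)]
    rw [qbin_of_lt (show n-(n+1) < n+1 by omega), mul_zero, add_zero]
  rw [hP1, hP2]
  rw [qbin_zero, qbin_zero]
  ring

lemma Vq_A (k n : ℕ) : Vq k (n+2) = qq^(n+1) * Vq k (n+1) - qq^(n+k+1) * Vq (k+1) n := by
  have hsplit : ∀ w, (-1:K)^(w+1) * qq^((n+2-(w+1)).choose 2 + (w+1)*(w+1) + k*(w+1)) * qbin (n+2-(w+1)) (w+1)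
      = qq^(n+1) * ((-1:K)^(w+1) * qq^((n+1-(w+1)).choose 2 + (w+1)*(w+1) + k*(w+1)) * qbin (n+1-(w+1)) (w+1))
        + (-(qq^(n+k+1))) * ((-1:K)^w * qq^((n-w).choose 2 + w*w + (k+1)*w) * qbin (n-w) w) := by
    intro w
    have h1 : n + 2 - (w+1) = n + 1 - w := by omega
    have h2 : n + 1 - (w+1) = n - w := by omega
    rw [h1, h2]
    rcases le_or_gt w n with hw | hw
    · have h3 : n + 1 - w = (n - w) + 1 := by omega
      rw [h3, qbin_pascal1 (n-w) w, choose2_succ (n-w)]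
      have e1 : (((n-w).choose 2 + (n-w)) + (w+1)*(w+1) + k*(w+1)) + (w+1)
          = ((n-w).choose 2 + (w+1)*(w+1) + k*(w+1)) + (n+1) := by
        have : n - w + (w + 1) = n + 1 := by omega
        omega
      have e2 : ((n-w).choose 2 + (n-w)) + (w+1)*(w+1) + k*(w+1)
          = ((n-w).choose 2 + w*w + (k+1)*w) + (n+k+1) := by
        have h4 : (w+1)*(w+1) = w*w + 2*w + 1 := by ring
        have h5 : k*(w+1) = k*w + k := by ring
        have h6 : (k+1)*w = k*w + w := by ring
        omega
      calc (-1:K)^(w+1) * qq^(((n-w).choose 2 + (n-w)) + (w+1)*(w+1) + k*(w+1))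
            * (qbin (n-w) w + qq^(w+1) * qbin (n-w) (w+1))
          = (-1:K)^(w+1) * (qq^(((n-w).choose 2 + (n-w)) + (w+1)*(w+1) + k*(w+1)) * qq^(w+1))
              * qbin (n-w) (w+1)
            + (-1:K)^(w+1) * qq^(((n-w).choose 2 + (n-w)) + (w+1)*(w+1) + k*(w+1)) * qbin (n-w) w := by ring
        _ = _ := by
          rw [← pow_add, e1, e2, pow_add, pow_add, pow_succ]
          ring
    · have hz1 : qbin (n+1-w) (w+1) = 0 := qbin_of_lt (by omega)
      have hz2 : qbin (n-w) (w+1) = 0 := qbin_of_lt (by omega)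
      have hz3 : qbin (n-w) w = 0 := qbin_of_lt (by omega)
      rw [hz1, hz2, hz3]
      ring
  rw [Vq, Finset.sum_range_succ']
  rw [Finset.sum_congr rfl (fun w _ => hsplit w), Finset.sum_add_distrib]
  have hP1 : ∑ w ∈ range (n+2),
      (qq^(n+1) * ((-1:K)^(w+1) * qq^((n+1-(w+1)).choose 2 + (w+1)*(w+1) + k*(w+1)) * qbin (n+1-(w+1)) (w+1)))
      = qq^(n+1) * (Vq k (n+1)
        - (-1:K)^0 * qq^((n+1-0).choose 2 + 0*0 + k*0) * qbin (n+1-0) 0) := by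
    rw [← Finset.mul_sum]
    congr 1
    rw [eq_sub_iff_add_eq]
    rw [Finset.sum_range_succ
      (fun w => (-1:K)^(w+1) * qq^((n+1-(w+1)).choose 2 + (w+1)*(w+1) + k*(w+1)) * qbin (n+1-(w+1)) (w+1)) (n+1)]
    rw [qbin_of_lt (show n+1-(n+1+1) < n+1+1 by omega), mul_zero, add_zero]
    rw [Vq]
    exact (Finset.sum_range_succ'
      (fun w => (-1:K)^w * qq^((n+1-w).choose 2 + w*w + k*w) * qbin (n+1-w) w) (n+1)).symm
  have hP2 : ∑ w ∈ range (n+2),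
      ((-(qq^(n+k+1))) * ((-1:K)^w * qq^((n-w).choose 2 + w*w + (k+1)*w) * qbin (n-w) w))
      = -(qq^(n+k+1)) * Vq (k+1) n := by
    rw [← Finset.mul_sum]
    congr 1
    rw [Vq, Finset.sum_range_succ
      (fun w => (-1:K)^w * qq^((n-w).choose 2 + w*w + (k+1)*w) * qbin (n-w) w) (n+1)]
    rw [qbin_of_lt (show n-(n+1) < n+1 by omega), mul_zero, add_zero]
  rw [hP1, hP2]
  rw [qbin_zero, qbin_zero]
  have hc : (n+2-0).choose 2 = ((n+1-0).choose 2 + 0*0 + k*0) + (n+1) := by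
    simp only [Nat.sub_zero, Nat.mul_zero, Nat.zero_mul, Nat.add_zero]
    rw [choose2_succ (n+1)]
  rw [show (n+2-0).choose 2 + 0*0 + k*0 = ((n+1-0).choose 2 + 0*0 + k*0) + (n+1) by
    simpa using hc]
  rw [pow_add]
  ring

lemma Vq_B (k n : ℕ) : Vq (k+1) (n+2) = qq^(n+1) * Vq k (n+1) - qq^(2*n+k+2) * Vq k n := by
  have hsplit : ∀ w, (-1:K)^(w+1) * qq^((n+2-(w+1)).choose 2 + (w+1)*(w+1) + (k+1)*(w+1)) * qbin (n+2-(w+1)) (w+1)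
      = qq^(n+1) * ((-1:K)^(w+1) * qq^((n+1-(w+1)).choose 2 + (w+1)*(w+1) + k*(w+1)) * qbin (n+1-(w+1)) (w+1))
        + (-(qq^(2*n+k+2))) * ((-1:K)^w * qq^((n-w).choose 2 + w*w + k*w) * qbin (n-w) w) := by
    intro w
    have h1 : n + 2 - (w+1) = n + 1 - w := by omega
    have h2 : n + 1 - (w+1) = n - w := by omega
    rw [h1, h2]
    rcases le_or_gt w n with hw | hw
    · have h3 : n + 1 - w = (n - w) + 1 := by omega
      rw [h3, qbin_pascal2 (n-w) w, choose2_succ (n-w)]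
      have e1 : (((n-w).choose 2 + (n-w)) + (w+1)*(w+1) + (k+1)*(w+1))
          = ((n-w).choose 2 + (w+1)*(w+1) + k*(w+1)) + (n+1) := by
        have h4 : (k+1)*(w+1) = k*(w+1) + w + 1 := by ring
        have h5 : n - w + (w + 1) = n + 1 := by omega
        omega
      rcases le_or_gt (2*w) n with h2w | h2w
      · have e2 : (((n-w).choose 2 + (n-w)) + (w+1)*(w+1) + (k+1)*(w+1)) + (n - w - w)
            = ((n-w).choose 2 + w*w + k*w) + (2*n+k+2) := by
          have h4 : (w+1)*(w+1) = w*w + 2*w + 1 := by ring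
          have h5 : (k+1)*(w+1) = k*w + k + w + 1 := by ring
          omega
        calc (-1:K)^(w+1) * qq^(((n-w).choose 2 + (n-w)) + (w+1)*(w+1) + (k+1)*(w+1))
              * (qbin (n-w) (w+1) + qq^(n-w-w) * qbin (n-w) w)
            = (-1:K)^(w+1) * qq^(((n-w).choose 2 + (n-w)) + (w+1)*(w+1) + (k+1)*(w+1)) * qbin (n-w) (w+1)
              + (-1:K)^(w+1) * (qq^(((n-w).choose 2 + (n-w)) + (w+1)*(w+1) + (k+1)*(w+1)) * qq^(n-w-w))
                * qbin (n-w) w := by ring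
          _ = _ := by
            rw [← pow_add, e2, e1, pow_add, pow_add, pow_succ]
            ring
      · have hz : qbin (n-w) w = 0 := qbin_of_lt (by omega)
        rw [hz, e1, pow_add]
        ring
    · have hz1 : qbin (n+1-w) (w+1) = 0 := qbin_of_lt (by omega)
      have hz2 : qbin (n-w) (w+1) = 0 := qbin_of_lt (by omega)
      have hz3 : qbin (n-w) w = 0 := qbin_of_lt (by omega)
      rw [hz1, hz2, hz3]
      ring
  rw [Vq, Finset.sum_range_succ']
  rw [Finset.sum_congr rfl (fun w _ => hsplit w), Finset.sum_add_distrib]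
  have hP1 : ∑ w ∈ range (n+2),
      (qq^(n+1) * ((-1:K)^(w+1) * qq^((n+1-(w+1)).choose 2 + (w+1)*(w+1) + k*(w+1)) * qbin (n+1-(w+1)) (w+1)))
      = qq^(n+1) * (Vq k (n+1)
        - (-1:K)^0 * qq^((n+1-0).choose 2 + 0*0 + k*0) * qbin (n+1-0) 0) := by
    rw [← Finset.mul_sum]
    congr 1
    rw [eq_sub_iff_add_eq]
    rw [Finset.sum_range_succ
      (fun w => (-1:K)^(w+1) * qq^((n+1-(w+1)).choose 2 + (w+1)*(w+1) + k*(w+1)) * qbin (n+1-(w+1)) (w+1)) (n+1)]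
    rw [qbin_of_lt (show n+1-(n+1+1) < n+1+1 by omega), mul_zero, add_zero]
    rw [Vq]
    exact (Finset.sum_range_succ'
      (fun w => (-1:K)^w * qq^((n+1-w).choose 2 + w*w + k*w) * qbin (n+1-w) w) (n+1)).symm
  have hP2 : ∑ w ∈ range (n+2),
      ((-(qq^(2*n+k+2))) * ((-1:K)^w * qq^((n-w).choose 2 + w*w + k*w) * qbin (n-w) w))
      = -(qq^(2*n+k+2)) * Vq k n := by
    rw [← Finset.mul_sum]
    congr 1
    rw [Vq, Finset.sum_range_succ
      (fun w => (-1:K)^w * qq^((n-w).choose 2 + w*w + k*w) * qbin (n-w) w) (n+1)]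
    rw [qbin_of_lt (show n-(n+1) < n+1 by omega), mul_zero, add_zero]
  rw [hP1, hP2]
  rw [qbin_zero, qbin_zero]
  have hc : (n+2-0).choose 2 + 0*0 + (k+1)*0 = ((n+1-0).choose 2 + 0*0 + k*0) + (n+1) := by
    simp only [Nat.sub_zero, Nat.mul_zero, Nat.zero_mul, Nat.add_zero]
    rw [choose2_succ (n+1)]
  rw [hc, pow_add]
  ring

end QAux

namespace QAux

local notation "K" => RatFunc ℚ

lemma Sq_three (n : ℕ) : Sq 0 (n+3) = -(qq^(n+1)) * Sq 0 n := by
  have hA := Sq_A 0 (n+1)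
  have hB := Sq_B 0 n
  rw [show n+3 = (n+1)+2 by ring] at *
  rw [hA, hB, pow_zero]
  ring

lemma Vq_zero_zero : Vq 0 0 = 1 := by
  rw [Vq]
  simp [qbin_self]

lemma Vq_one_one : Vq 1 1 = 1 := by
  rw [Vq, Finset.sum_range_succ, Finset.sum_range_one]
  rw [qbin_zero, qbin_of_lt (by omega : (0:ℕ) < 1)]
  norm_num

lemma Vq_zero_two : Vq 0 2 = 0 := by
  rw [Vq, Finset.sum_range_succ, Finset.sum_range_succ, Finset.sum_range_one]
  rw [qbin_zero, qbin_self, qbin_of_lt (by omega : (0:ℕ) < 2)]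
  norm_num

lemma Vq_zero_one : Vq 0 1 = 1 := by
  rw [Vq, Finset.sum_range_succ, Finset.sum_range_one]
  rw [qbin_zero, qbin_of_lt (by omega : (0:ℕ) < 1)]
  norm_num

lemma Vq_three : ∀ n, Vq 0 (n+3) = -(qq^(2*n+2)) * Vq 0 n := by
  intro n
  induction n with
  | zero =>
    have hA := Vq_A 0 1
    rw [show (0:ℕ)+3 = 1+2 by ring, hA, Vq_zero_two, Vq_one_one, Vq_zero_zero]
    norm_num
  | succ n IH =>
    have hA := Vq_A 0 (n+2)
    have hB := Vq_B 0 n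
    rw [show n+1+3 = (n+2)+2 by ring, hA, show n+2+1 = n+3 by ring, IH, hB]
    have hq1 : qq^(n+2+1) * qq^(n+1) = qq^(2*(n+1)+2) := by
      rw [← pow_add]; congr 1; ring
    have hq2 : qq^(n+2+0+1) = qq^(n+2+1) := by norm_num
    rw [hq2]
    linear_combination (-(Vq 0 (n+1))) * hq1

lemma six_dvd {n : ℕ} (h : n % 3 ≠ 2) : 6 ∣ n * (n - 1) := by
  rcases n with _ | m
  · simp
  · simp only [Nat.add_sub_cancel]
    obtain ⟨k, s, hs, rfl⟩ : ∃ k s, s < 6 ∧ m = 6*k + s :=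
      ⟨m / 6, m % 6, Nat.mod_lt _ (by norm_num), by omega⟩
    have hs3 : (6*k + s + 1) % 3 ≠ 2 := h
    interval_cases s
    · exact ⟨k*(6*k+1), by ring⟩
    · exact absurd (by omega) hs3
    · exact ⟨(2*k+1)*(3*k+1), by ring⟩
    · exact ⟨(3*k+2)*(2*k+1), by ring⟩
    · exact absurd (by omega) hs3
    · exact ⟨(k+1)*(6*k+5), by ring⟩

lemma Sq_closed : ∀ n, Sq 0 n = if n % 3 = 2 then 0
    else (-1:K)^(n/3) * qq^(n*(n-1)/6) := by
  intro n
  induction n using Nat.strong_induction_on with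
  | _ n IH =>
    match n, IH with
    | 0, _ => simp [Sq, qbin_self]
    | 1, _ =>
      rw [Sq, Finset.sum_range_succ, Finset.sum_range_one]
      rw [qbin_zero, qbin_of_lt (by omega : (0:ℕ) < 1)]
      norm_num
    | 2, _ =>
      rw [Sq, Finset.sum_range_succ, Finset.sum_range_succ, Finset.sum_range_one]
      rw [qbin_zero, qbin_self, qbin_of_lt (by omega : (0:ℕ) < 2)]
      norm_num
    | (m+3), IH =>
      rw [Sq_three m, IH m (by omega)]
      have h3 : (m+3) % 3 = m % 3 := by omega
      rcases eq_or_ne (m % 3) 2 with h2 | h2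
      · rw [if_pos h2, if_pos (by omega), mul_zero]
      · rw [if_neg h2, if_neg (by omega)]
        obtain ⟨d, hd⟩ := six_dvd h2
        have hdiv1 : m * (m-1) / 6 = d := by omega
        have hprod : (m+3) * (m+3-1) = m*(m-1) + 6*(m+1) := by
          rcases m with _ | t
          · norm_num
          · have h1 : t+1+3-1 = t+3 := by omega
            have h2 : t+1-1 = t := by omega
            rw [h1, h2]
            ring
        have hdiv2 : (m+3) * (m+3-1) / 6 = d + (m+1) := by omega
        have hdiv3 : (m+3)/3 = m/3 + 1 := by omega
        rw [hdiv1, hdiv2, hdiv3, pow_succ, pow_add]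
        ring

end QAux

namespace QAux

local notation "K" => RatFunc ℚ

noncomputable def Uq (n : ℕ) : K :=
  ∑ r ∈ range (n+1), (-1:K)^r * qq^(r.choose 2 + (n-r)*(n-r)) * qbin r (n-r)

lemma Uq_eq (n : ℕ) : Uq n = (-1:K)^n * Vq 0 n := by
  rw [Uq, ← Finset.sum_range_reflect
    (fun r => (-1:K)^r * qq^(r.choose 2 + (n-r)*(n-r)) * qbin r (n-r)) (n+1)]
  rw [Vq, Finset.mul_sum]
  apply Finset.sum_congr rfl
  intro w hw
  simp only [Finset.mem_range] at hw
  have h1 : n + 1 - 1 - w = n - w := by omega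
  have h2 : n - (n - w) = w := by omega
  rw [h1, h2, neg_one_pow_sub (by omega : w ≤ n)]
  have h3 : (n-w).choose 2 + w*w + 0*w = (n-w).choose 2 + w*w := by ring
  rw [h3]
  ring

lemma Uq_three (n : ℕ) : Uq (n+3) = qq^(2*n+2) * Uq n := by
  rw [Uq_eq, Uq_eq, Vq_three, pow_add]
  norm_num
  ring

lemma prod3 (m : ℕ) : (m+3)*(m+3-1) = m*(m-1) + 6*(m+1) := by
  rcases m with _ | t
  · norm_num
  · have h1 : t+1+3-1 = t+3 := by omega
    have h2 : t+1-1 = t := by omega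
    rw [h1, h2]
    ring

lemma Uq_closed : ∀ n, Uq n = if n % 3 = 2 then 0
    else (-1:K)^((n+1)*2/3) * qq^(2*n*(n-1)/6) := by
  intro n
  induction n using Nat.strong_induction_on with
  | _ n IH =>
    match n, IH with
    | 0, _ => rw [Uq_eq, Vq_zero_zero]; norm_num
    | 1, _ => rw [Uq_eq, Vq_zero_one]; norm_num
    | 2, _ => rw [Uq_eq, Vq_zero_two]; norm_num
    | (m+3), IH =>
      rw [Uq_three m, IH m (by omega)]
      rcases eq_or_ne (m % 3) 2 with h2 | h2
      · rw [if_pos h2, if_pos (by omega), mul_zero]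
      · rw [if_neg h2, if_neg (by omega)]
        obtain ⟨d, hd⟩ := six_dvd h2
        have ha1 : 2*m*(m-1) = 2*(m*(m-1)) := by ring
        have ha2 : 2*(m+3)*(m+3-1) = 2*((m+3)*(m+3-1)) := by ring
        have hp := prod3 m
        have hdiv1 : 2*m*(m-1)/6 = 2*d := by omega
        have hdiv2 : 2*(m+3)*(m+3-1)/6 = 2*d + (2*m+2) := by omega
        have hdiv3 : (m+3+1)*2/3 = (m+1)*2/3 + 2 := by omega
        rw [hdiv1, hdiv2, hdiv3, pow_add, pow_add]
        norm_num
        ring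

lemma trace_Mq_one (n : ℕ) : Matrix.trace (Mq n) = Sq 0 n := by
  have h : Matrix.trace (Mq n)
      = ∑ i : Fin (n+1), qbin (n-(i:ℕ)) (i:ℕ) * qq^((i:ℕ).choose 2) * (-1:K)^(i:ℕ) := rfl
  rw [h, Fin.sum_univ_eq_sum_range
    (fun r => qbin (n-r) r * qq^(r.choose 2) * (-1:K)^r) (n+1), Sq]
  apply Finset.sum_congr rfl
  intro r _
  have h3 : r.choose 2 + 0*r = r.choose 2 := by ring
  rw [h3]
  ring

lemma trace_Mq_two (n : ℕ) : Matrix.trace (Mq n * Mq n) = Uq n := by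
  have h : Matrix.trace (Mq n * Mq n) = ∑ i : Fin (n+1), (Mq n * Mq n) i i := rfl
  rw [h, Finset.sum_congr rfl (fun i _ => Mq_sq n i i)]
  rw [Fin.sum_univ_eq_sum_range
    (fun r => qbin r (n-r) * qq^(r.choose 2 + (n-r)*(n-r)) * (-1:K)^r) (n+1), Uq]
  apply Finset.sum_congr rfl
  intro r _
  ring

lemma trace_closed (n : ℕ) : ∀ m, 0 < m → m % 3 ≠ 0 →
    Matrix.trace ((Mq n)^m) = if n % 3 = 2 then 0
      else (-1:K)^((m+n-1)*m/3) * qq^(m*n*(n-1)/6) := by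
  intro m
  induction m using Nat.strong_induction_on with
  | _ m IH =>
    intro hm hm3
    match m, IH with
    | 0, _ => omega
    | 1, _ =>
      rw [pow_one, trace_Mq_one, Sq_closed]
      rcases eq_or_ne (n % 3) 2 with h2 | h2
      · rw [if_pos h2, if_pos h2]
      · rw [if_neg h2, if_neg h2]
        rw [show (1+n-1)*1 = n from by omega, show 1*n = n from one_mul n]
    | 2, _ =>
      rw [pow_two, trace_Mq_two, Uq_closed]
      rcases eq_or_ne (n % 3) 2 with h2 | h2
      · rw [if_pos h2, if_pos h2]
      · rw [if_neg h2, if_neg h2]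
        rw [show (2+n-1)*2 = (n+1)*2 from by omega]
    | (m'+3), IH =>
      have hm' : 0 < m' := by omega
      have hm'3 : m' % 3 ≠ 0 := by omega
      rw [pow_add, Mq_cube, Matrix.mul_smul, Matrix.mul_one, Matrix.trace_smul,
        smul_eq_mul, IH m' (by omega) hm' hm'3]
      rcases eq_or_ne (n % 3) 2 with h2 | h2
      · rw [if_pos h2, if_pos h2, mul_zero]
      · rw [if_neg h2, if_neg h2]
        obtain ⟨d, hd⟩ := six_dvd h2
        have hch : n.choose 2 = 3*d := by
          rw [Nat.choose_two_right]
          omega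
        have ha1 : m'*n*(n-1) = m'*(n*(n-1)) := by ring
        have ha2 : (m'+3)*n*(n-1) = (m'+3)*(n*(n-1)) := by ring
        have hb1 : m'*(6*d) = 6*(m'*d) := by ring
        have hb2 : (m'+3)*(6*d) = 6*(m'*d + 3*d) := by ring
        have hdiv1 : m'*n*(n-1)/6 = m'*d := by
          rw [ha1, hd, hb1]
          omega
        have hdiv2 : (m'+3)*n*(n-1)/6 = m'*d + 3*d := by
          rw [ha2, hd, hb2]
          omega
        obtain ⟨t, rfl⟩ : ∃ t, m' = t+1 := ⟨m'-1, by omega⟩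
        have he1 : (t+1)+n-1 = t+n := by omega
        have he2 : (t+1)+3+n-1 = t+n+3 := by omega
        have hBA : (t+n+3)*((t+1)+3) = (t+n)*(t+1) + 3*(2*t+n+4) := by ring
        have hsdiv : ((t+1)+3+n-1)*((t+1)+3)/3 = ((t+1)+n-1)*(t+1)/3 + (2*t+n+4) := by
          rw [he1, he2, hBA]
          omega
        have hsgn : (-1:K)^(2*t+n+4) = (-1:K)^n := by
          rw [show 2*t+n+4 = 2*(t+2) + n from by ring, pow_add, pow_mul]
          norm_num
        have hqq : qq^(n.choose 2) * qq^((t+1)*d) = qq^((t+1)*d + 3*d) := by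
          rw [hch, ← pow_add]
          congr 1
          omega
        have hsg : (-1:K)^((t+1+3+n-1)*(t+1+3)/3)
            = (-1:K)^n * (-1:K)^((t+1+n-1)*(t+1)/3) := by
          rw [hsdiv, pow_add, hsgn]
          ring
        rw [hdiv1, hdiv2, hsg]
        linear_combination ((-1:K)^n * (-1:K)^((t+1+n-1)*(t+1)/3)) * hqq

end QAux

theorem stmt8 (m n : ℕ) (hm : 0 < m) (hn : 0 < n) (hm3 : m % 3 ≠ 0) :
    ∑ r : Fin m → Fin (n + 1), ∏ k : Fin m,
      (qbin (n - (r k : ℕ)) (r ⟨((k : ℕ) + 1) % m, Nat.mod_lt _ hm⟩ : ℕ) *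
        RatFunc.X ^ ((r k : ℕ)).choose 2 * (-1 : RatFunc ℚ) ^ (r k : ℕ))
    = if n % 3 = 2 then 0
      else (-1 : RatFunc ℚ) ^ ((m + n - 1) * m / 3) * RatFunc.X ^ (m * n * (n - 1) / 6) := by
  have h := QAux.trace_pow_cyclic (QAux.Mq n) m hm
  rw [← QAux.trace_closed n m hm hm3, h]
  apply Finset.sum_congr rfl
  intro r _
  apply Finset.prod_congr rfl
  intro k _
  rfl
end

section
/- Let m, n ≥ 1 and let x_1, …, x_m be complex numbers with x_k ≠ -1 for all k and x_1⋯x_m ≠ 1. Then ∑_{r_1,…,r_m ≤ n} ∏_{k=1}^{m} C(n-r_k, r_{k+1}) · (-x_k)^{r_k} / (1+x_k)^{r_k + r_{k+1}} = (1 - (x_1⋯x_m)^{n+1}) / (1 - x_1⋯x_m) · ∏_{k=1}^{m} (1+x_k)^{-n}, where r_{m+1} := r_1. -/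
open Finset

namespace Stmt13Aux

open Polynomial

noncomputable def Phi (P Q : Polynomial ℂ) (N : ℕ) (F : Polynomial ℂ) : Polynomial ℂ :=
  ∑ s ∈ range (N+1), C (F.coeff s) * P^s * Q^(N-s)

lemma Phi_mul (P Q : Polynomial ℂ) (n1 n2 : ℕ) (F G : Polynomial ℂ)
    (hF : F.natDegree ≤ n1) (hG : G.natDegree ≤ n2) :
    Phi P Q (n1+n2) (F*G) = Phi P Q n1 F * Phi P Q n2 G := by
  classical
  unfold Phi
  have hcoeff : ∀ i, n1 < i → F.coeff i = 0 := fun i hi => F.coeff_eq_zero_of_natDegree_lt (lt_of_le_of_lt hF hi)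
  have hcoeffG : ∀ j, n2 < j → G.coeff j = 0 := fun j hj => G.coeff_eq_zero_of_natDegree_lt (lt_of_le_of_lt hG hj)
  set N := n1 + n2 with hN
  rw [Finset.sum_mul_sum]
  have LHS : ∑ s ∈ range (N+1), C ((F*G).coeff s) * P^s * Q^(N-s)
      = ∑ p ∈ (range (N+1) ×ˢ range (N+1)).filter (fun p => p.1 + p.2 ≤ N),
          C (F.coeff p.1 * G.coeff p.2) * P^(p.1+p.2) * Q^(N-(p.1+p.2)) := by
    have : ∀ s ∈ range (N+1), C ((F*G).coeff s) * P^s * Q^(N-s)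
        = ∑ ij ∈ antidiagonal s, C (F.coeff ij.1 * G.coeff ij.2) * P^(ij.1+ij.2) * Q^(N-(ij.1+ij.2)) := by
      intro s _
      rw [Polynomial.coeff_mul, map_sum, Finset.sum_mul, Finset.sum_mul]
      refine Finset.sum_congr rfl fun ij hij => ?_
      rw [Finset.HasAntidiagonal.mem_antidiagonal] at hij
      rw [hij]
    rw [Finset.sum_congr rfl this, Finset.sum_sigma']
    refine Finset.sum_nbij' (fun q => (q.2.1, q.2.2)) (fun p => ⟨p.1 + p.2, p⟩) ?_ ?_ ?_ ?_ ?_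
    · rintro ⟨s, a, b⟩ hq
      simp only [Finset.mem_sigma, Finset.mem_range, Finset.HasAntidiagonal.mem_antidiagonal] at hq
      simp only [Finset.mem_filter, Finset.mem_product, Finset.mem_range]
      omega
    · rintro ⟨a, b⟩ hp
      simp only [Finset.mem_filter, Finset.mem_product, Finset.mem_range] at hp
      simp only [Finset.mem_sigma, Finset.mem_range, Finset.HasAntidiagonal.mem_antidiagonal]
      exact ⟨by omega, trivial⟩
    · rintro ⟨s, a, b⟩ hq
      simp only [Finset.mem_sigma, Finset.mem_range, Finset.HasAntidiagonal.mem_antidiagonal] at hq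
      simp [hq.2]
    · rintro ⟨a, b⟩ _; rfl
    · rintro ⟨s, a, b⟩ _; rfl
  rw [LHS]
  set f : ℕ × ℕ → Polynomial ℂ :=
    fun p => C (F.coeff p.1 * G.coeff p.2) * P^(p.1+p.2) * Q^(N-(p.1+p.2)) with hf
  have hzero : ∀ p : ℕ × ℕ, n1 < p.1 ∨ n2 < p.2 → f p = 0 := by
    rintro ⟨a, b⟩ (h | h)
    · simp [hf, hcoeff a h]
    · simp [hf, hcoeffG b h]
  have step1 : ∑ p ∈ (range (N+1) ×ˢ range (N+1)).filter (fun p => p.1 + p.2 ≤ N), f p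
      = ∑ p ∈ range (N+1) ×ˢ range (N+1), f p := by
    refine Finset.sum_filter_of_ne ?_
    intro p _ h
    by_contra hc
    push_neg at hc
    exact h (hzero p (by omega))
  rw [step1]
  have step2 : ∑ p ∈ range (N+1) ×ˢ range (N+1), f p
      = ∑ p ∈ range (n1+1) ×ˢ range (n2+1), f p := by
    refine (Finset.sum_subset ?_ ?_).symm
    · intro p hp
      simp only [Finset.mem_product, Finset.mem_range] at hp ⊢
      omega
    · intro p hp hnp
      simp only [Finset.mem_product, Finset.mem_range] at hp hnp
      exact hzero p (by omega)
  rw [step2, Finset.sum_product]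
  refine Finset.sum_congr rfl fun i hi => Finset.sum_congr rfl fun j hj => ?_
  simp only [Finset.mem_range] at hi hj
  have hq : n1 - i + (n2 - j) = N - (i + j) := by omega
  rw [hf]
  simp only []
  rw [map_mul]
  rw [← hq, pow_add]
  ring

lemma natDegree_lin (a b : ℂ) : (C a + C b * X).natDegree ≤ 1 := by
  refine le_trans (Polynomial.natDegree_add_le _ _) ?_
  simp [Polynomial.natDegree_C_mul_le]
  exact le_trans (Polynomial.natDegree_mul_le) (by simp)

lemma Phi_one (P Q : Polynomial ℂ) : Phi P Q 0 1 = 1 := by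
  simp [Phi]

lemma Phi_lin (P Q : Polynomial ℂ) (a b : ℂ) :
    Phi P Q 1 (C a + C b * X) = C a * Q + C b * P := by
  unfold Phi
  rw [Finset.sum_range_succ, Finset.sum_range_succ]
  simp [Polynomial.coeff_C]

lemma Phi_pow_lin (P Q : Polynomial ℂ) (a b : ℂ) (r : ℕ) :
    Phi P Q r ((C a + C b * X)^r) = (C a * Q + C b * P)^r := by
  induction r with
  | zero => simpa using Phi_one P Q
  | succ r ih =>
      have h1 : Phi P Q (r+1) ((C a + C b * X)^r * (C a + C b * X))
          = Phi P Q r ((C a + C b * X)^r) * Phi P Q 1 (C a + C b * X) :=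
        Phi_mul P Q r 1 _ _
          (le_trans (Polynomial.natDegree_pow_le) (by
            calc r * (C a + C b * X).natDegree ≤ r * 1 := Nat.mul_le_mul_left r (natDegree_lin a b)
            _ = r := by omega))
          (natDegree_lin a b)
      rw [pow_succ, h1, ih, Phi_lin, ← pow_succ]

lemma Phi_prod_lin (P Q : Polynomial ℂ) (a b c d : ℂ) (n r : ℕ) (hr : r ≤ n) :
    Phi P Q n ((C a + C b * X)^r * (C c + C d * X)^(n-r))
      = (C a * Q + C b * P)^r * (C c * Q + C d * P)^(n-r) := by
  have h := Phi_mul P Q r (n-r) ((C a + C b * X)^r) ((C c + C d * X)^(n-r))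
    (le_trans (Polynomial.natDegree_pow_le) (by
      calc r * (C a + C b * X).natDegree ≤ r * 1 := Nat.mul_le_mul_left r (natDegree_lin a b)
      _ = r := by omega))
    (le_trans (Polynomial.natDegree_pow_le) (by
      calc (n-r) * (C c + C d * X).natDegree ≤ (n-r) * 1 := Nat.mul_le_mul_left _ (natDegree_lin c d)
      _ = n - r := by omega))
  rw [Nat.add_sub_cancel' hr] at h
  rw [h, Phi_pow_lin, Phi_pow_lin]

def W : Matrix (Fin 2) (Fin 2) ℂ := !![0, 1; 1, 0]

noncomputable def Nmat (n : ℕ) (g : Matrix (Fin 2) (Fin 2) ℂ) :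
    Matrix (Fin (n+1)) (Fin (n+1)) ℂ :=
  Matrix.of fun r s =>
    ((C (g 0 0) + C (g 0 1) * X)^(r:ℕ) * (C (g 1 0) + C (g 1 1) * X)^(n-(r:ℕ))).coeff (s:ℕ)

lemma gWh_apply (g h : Matrix (Fin 2) (Fin 2) ℂ) (i j : Fin 2) :
    (g * W * h) i j = g i 0 * h 1 j + g i 1 * h 0 j := by
  simp [W, Matrix.mul_apply, Fin.sum_univ_succ]
  ring

lemma Nmat_mul (n : ℕ) (g h : Matrix (Fin 2) (Fin 2) ℂ) :
    Nmat n g * Nmat n h = Nmat n (g * W * h) := by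
  ext r t
  rw [Matrix.mul_apply]
  have step1 : (∑ s : Fin (n+1), Nmat n g r s * Nmat n h s t)
      = ∑ s ∈ range (n+1),
          ((C (g 0 0) + C (g 0 1) * X)^(r:ℕ) * (C (g 1 0) + C (g 1 1) * X)^(n-(r:ℕ))).coeff s *
          ((C (h 0 0) + C (h 0 1) * X)^s * (C (h 1 0) + C (h 1 1) * X)^(n-s)).coeff (t:ℕ) :=
    Fin.sum_univ_eq_sum_range (fun s =>
      ((C (g 0 0) + C (g 0 1) * X)^(r:ℕ) * (C (g 1 0) + C (g 1 1) * X)^(n-(r:ℕ))).coeff s *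
      ((C (h 0 0) + C (h 0 1) * X)^s * (C (h 1 0) + C (h 1 1) * X)^(n-s)).coeff (t:ℕ)) (n+1)
  rw [step1]
  have step2 : ∑ s ∈ range (n+1),
          ((C (g 0 0) + C (g 0 1) * X)^(r:ℕ) * (C (g 1 0) + C (g 1 1) * X)^(n-(r:ℕ))).coeff s *
          ((C (h 0 0) + C (h 0 1) * X)^s * (C (h 1 0) + C (h 1 1) * X)^(n-s)).coeff (t:ℕ)
      = (Phi (C (h 0 0) + C (h 0 1) * X) (C (h 1 0) + C (h 1 1) * X) n
          ((C (g 0 0) + C (g 0 1) * X)^(r:ℕ) * (C (g 1 0) + C (g 1 1) * X)^(n-(r:ℕ)))).coeff (t:ℕ) := by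
    unfold Phi
    rw [Polynomial.finset_sum_coeff]
    refine Finset.sum_congr rfl fun s _ => ?_
    rw [mul_assoc, Polynomial.coeff_C_mul]
  rw [step2, Phi_prod_lin _ _ _ _ _ _ n (r:ℕ) (Nat.lt_succ_iff.mp r.isLt)]
  have eq1 : C (g 0 0) * (C (h 1 0) + C (h 1 1) * X) + C (g 0 1) * (C (h 0 0) + C (h 0 1) * X)
      = C ((g * W * h) 0 0) + C ((g * W * h) 0 1) * X := by
    rw [gWh_apply, gWh_apply, map_add, map_add, map_mul, map_mul, map_mul, map_mul]
    ring
  have eq2 : C (g 1 0) * (C (h 1 0) + C (h 1 1) * X) + C (g 1 1) * (C (h 0 0) + C (h 0 1) * X)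
      = C ((g * W * h) 1 0) + C ((g * W * h) 1 1) * X := by
    rw [gWh_apply, gWh_apply, map_add, map_add, map_mul, map_mul, map_mul, map_mul]
    ring
  rw [eq1, eq2]
  rfl

lemma openPath {I : Type*} [Fintype I] [DecidableEq I] :
    ∀ (m : ℕ) (A : Fin (m+1) → Matrix I I ℂ) (i j : I),
    (∑ r : Fin m → I, ∏ k : Fin (m+1),
        A k ((Fin.cons i (Fin.snoc r j) : Fin (m+2) → I) k.castSucc)
            ((Fin.cons i (Fin.snoc r j) : Fin (m+2) → I) k.succ))
    = ((List.ofFn A).prod) i j := by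
  intro m
  induction m with
  | zero =>
      intro A i j
      rw [Fintype.sum_unique, Fin.prod_univ_one, Fin.castSucc_zero, Fin.cons_zero, Fin.cons_succ]
      rw [show (0:Fin 1) = Fin.last 0 from rfl, Fin.snoc_last]
      simp [List.ofFn_succ]
  | succ m ih =>
      intro A i j
      let e' : (I × (Fin m → I)) ≃ (Fin (m+1) → I) :=
        { toFun := fun p => Fin.cons p.1 p.2
          invFun := fun r => (r 0, fun k => r k.succ)
          left_inv := fun p => by simp
          right_inv := fun r => Fin.cons_self_tail r }
      have key := Fintype.sum_equiv e'
        (fun p : I × (Fin m → I) => ∏ k : Fin (m+2),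
            A k ((Fin.cons i (Fin.snoc (e' p) j) : Fin (m+3) → I) k.castSucc)
                ((Fin.cons i (Fin.snoc (e' p) j) : Fin (m+3) → I) k.succ))
        (fun r : Fin (m+1) → I => ∏ k : Fin (m+2),
            A k ((Fin.cons i (Fin.snoc r j) : Fin (m+3) → I) k.castSucc)
                ((Fin.cons i (Fin.snoc r j) : Fin (m+3) → I) k.succ))
        (fun p => rfl)
      rw [← key]
      rw [Fintype.sum_prod_type]
      have main : ∀ (t : I) (r' : Fin m → I),
          (∏ k : Fin (m+2),
            A k ((Fin.cons i (Fin.snoc (e' (t, r')) j) : Fin (m+3) → I) k.castSucc)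
                ((Fin.cons i (Fin.snoc (e' (t, r')) j) : Fin (m+3) → I) k.succ))
          = A 0 i t * ∏ k : Fin (m+1),
              (fun k' => A (Fin.succ k')) k
                ((Fin.cons t (Fin.snoc r' j) : Fin (m+2) → I) k.castSucc)
                ((Fin.cons t (Fin.snoc r' j) : Fin (m+2) → I) k.succ) := by
        intro t r'
        have hnodes : ∀ l : Fin (m+2),
            (Fin.cons i (Fin.snoc (Fin.cons t r') j) : Fin (m+3) → I) l.succ
              = (Fin.cons t (Fin.snoc r' j) : Fin (m+2) → I) l := by
          intro l
          rw [Fin.cons_succ, ← Fin.cons_snoc_eq_snoc_cons]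
        show (∏ k : Fin (m+2),
            A k ((Fin.cons i (Fin.snoc (Fin.cons t r') j) : Fin (m+3) → I) k.castSucc)
                ((Fin.cons i (Fin.snoc (Fin.cons t r') j) : Fin (m+3) → I) k.succ)) = _
        rw [Fin.prod_univ_succ]
        congr 1
        · refine Finset.prod_congr rfl fun k _ => ?_
          rw [show (Fin.succ k).castSucc = (k.castSucc).succ from (Fin.succ_castSucc k).symm]
          rw [hnodes k.castSucc, hnodes k.succ]
      calc ∑ t : I, ∑ r' : Fin m → I, _ = ∑ t : I, A 0 i t * ((List.ofFn fun k' => A (Fin.succ k')).prod) t j := by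
            refine Finset.sum_congr rfl fun t _ => ?_
            rw [← ih (fun k' => A (Fin.succ k')) t j, Finset.mul_sum]
            exact Finset.sum_congr rfl fun r' _ => main t r'
        _ = ((List.ofFn A).prod) i j := by
            conv_rhs => rw [List.ofFn_succ, List.prod_cons, Matrix.mul_apply]

lemma cyclicSum {I : Type*} [Fintype I] [DecidableEq I] (m : ℕ) (A : Fin (m+1) → Matrix I I ℂ) :
    ∑ r : Fin (m+1) → I, ∏ k : Fin (m+1), A k (r k) (r (k+1))
      = Matrix.trace ((List.ofFn A).prod) := by
  let e' : (I × (Fin m → I)) ≃ (Fin (m+1) → I) :=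
    { toFun := fun p => Fin.cons p.1 p.2
      invFun := fun r => (r 0, fun k => r k.succ)
      left_inv := fun p => by simp
      right_inv := fun r => Fin.cons_self_tail r }
  have key := Fintype.sum_equiv e'
    (fun p : I × (Fin m → I) => ∏ k : Fin (m+1), A k (e' p k) (e' p (k+1)))
    (fun r : Fin (m+1) → I => ∏ k : Fin (m+1), A k (r k) (r (k+1)))
    (fun p => rfl)
  rw [← key]
  rw [Fintype.sum_prod_type]
  rw [Matrix.trace]
  refine Finset.sum_congr rfl fun i _ => ?_
  rw [Matrix.diag]
  rw [← openPath m A i i]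
  refine Finset.sum_congr rfl fun r' _ => ?_
  refine Finset.prod_congr rfl fun k _ => ?_
  have c1 : (e' (i, r')) k
      = (Fin.cons i (Fin.snoc r' i) : Fin (m+2) → I) k.castSucc := by
    induction k using Fin.cases with
    | zero => rw [Fin.castSucc_zero, Fin.cons_zero]; rfl
    | succ k' =>
        show (Fin.cons i r' : Fin (m+1) → I) k'.succ = _
        rw [Fin.cons_succ, ← Fin.succ_castSucc, Fin.cons_succ, Fin.snoc_castSucc]
  have c2 : (e' (i, r')) (k+1)
      = (Fin.cons i (Fin.snoc r' i) : Fin (m+2) → I) k.succ := by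
    rw [Fin.cons_succ]
    by_cases hk : k = Fin.last m
    · subst hk
      rw [Fin.last_add_one, Fin.snoc_last]
      rfl
    · obtain ⟨k', rfl⟩ := Fin.exists_castSucc_eq.mpr hk
      rw [Fin.snoc_castSucc]
      have : (k'.castSucc + 1 : Fin (m+1)) = k'.succ := by
        apply Fin.ext
        simp [Fin.add_def, Fin.val_succ, Nat.mod_eq_of_lt (Nat.succ_lt_succ k'.isLt)]
      rw [this]
      show (Fin.cons i r' : Fin (m+1) → I) k'.succ = r' k'
      rw [Fin.cons_succ]
  rw [c1, c2]

lemma W_W : W * W = 1 := by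
  ext i j
  fin_cases i <;> fin_cases j <;> simp [W, Matrix.mul_apply, Fin.sum_univ_succ, Matrix.one_apply]

lemma K_form (xs : List ℂ) : ∃ a : ℂ,
    (xs.map fun x => !![0, -x; 1, 1+x]).prod
      = !![a, a - xs.prod; 1 - a, 1 - a + xs.prod] := by
  induction xs with
  | nil =>
      refine ⟨1, ?_⟩
      simp only [List.map_nil, List.prod_nil]
      ext i j
      fin_cases i <;> fin_cases j <;> simp [Matrix.one_apply]
  | cons x xs ih =>
      obtain ⟨a, ha⟩ := ih
      refine ⟨x * (a - 1), ?_⟩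
      rw [List.map_cons, List.prod_cons, ha, List.prod_cons]
      ext i j
      fin_cases i <;> fin_cases j <;>
        simp [Matrix.mul_apply, Fin.sum_univ_succ] <;> ring

lemma trace_NKW (n : ℕ) (a p : ℂ) (hp : p ≠ 1) :
    Matrix.trace (Nmat n (!![a, a - p; 1 - a, 1 - a + p] * W))
      = ∑ i ∈ range (n+1), p^i := by
  set S : Matrix (Fin 2) (Fin 2) ℂ := !![-1, a - p; 1, 1 - a] with hS
  set T : Matrix (Fin 2) (Fin 2) ℂ :=
    !![(1-a)/(p-1), (p-a)/(p-1); -1/(p-1), -1/(p-1)] with hT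
  set D : Matrix (Fin 2) (Fin 2) ℂ := !![p, 0; 0, 1] with hD
  set K : Matrix (Fin 2) (Fin 2) ℂ := !![a, a - p; 1 - a, 1 - a + p] with hK
  have hp1 : p - 1 ≠ 0 := sub_ne_zero.mpr hp
  have hTS : T * S = 1 := by
    ext i j
    fin_cases i <;> fin_cases j <;>
      (simp [hT, hS, Matrix.mul_apply, Fin.sum_univ_succ, Matrix.one_apply]
       <;> field_simp <;> ring)
  have hKS : K * S = S * D := by
    ext i j
    fin_cases i <;> fin_cases j <;>
      (simp [hK, hS, hD, Matrix.mul_apply, Fin.sum_univ_succ] <;> ring)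
  have hST : S * T = 1 := mul_eq_one_comm.mp hTS
  have hKSDT : K = S * D * T := by
    calc K = K * (S * T) := by rw [hST, mul_one]
      _ = (K * S) * T := by rw [mul_assoc]
      _ = S * D * T := by rw [hKS]
  have split : K * W = (S * W) * W * ((D * T) * W) := by
    rw [hKSDT, mul_assoc (S*W) W ((D*T)*W), ← mul_assoc W (D*T) W,
      ← mul_assoc (S*W) (W*(D*T)) W, ← mul_assoc (S*W) W (D*T),
      mul_assoc S W W, W_W, mul_one]
    simp only [mul_assoc]
  have step1 : Nmat n (K * W) = Nmat n (S * W) * Nmat n ((D * T) * W) := by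
    rw [Nmat_mul, ← split]
  have combine : ((D * T) * W) * W * (S * W) = D * W := by
    rw [mul_assoc (D*T) W W, W_W, mul_one, ← mul_assoc (D*T) S W, mul_assoc D T S, hTS,
      mul_one]
  have step2 : Matrix.trace (Nmat n (K * W)) = Matrix.trace (Nmat n (D * W)) := by
    rw [step1, Matrix.trace_mul_comm, Nmat_mul, combine]
  rw [step2]
  have hDW : D * W = !![0, p; 1, 0] := by
    ext i j
    fin_cases i <;> fin_cases j <;> simp [hD, W, Matrix.mul_apply, Fin.sum_univ_succ]
  rw [hDW]
  rw [Matrix.trace]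
  have hdiag : ∀ r : Fin (n+1), (Nmat n !![0, p; 1, 0]).diag r = p^(r:ℕ) := by
    intro r
    show ((C ((0:ℂ)) + C p * X)^(r:ℕ) * (C 1 + C 0 * X)^(n-(r:ℕ))).coeff (r:ℕ) = p^(r:ℕ)
    simp [Polynomial.coeff_X_pow, mul_pow, ← map_pow]
  calc ∑ r : Fin (n+1), (Nmat n !![0, p; 1, 0]).diag r
      = ∑ r : Fin (n+1), p^(r:ℕ) := Finset.sum_congr rfl fun r _ => hdiag r
    _ = ∑ i ∈ range (n+1), p^i := Fin.sum_univ_eq_sum_range (fun i => p^i) (n+1)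

lemma Nmat_list (n : ℕ) :
    ∀ (l : List (Matrix (Fin 2) (Fin 2) ℂ)) (g : Matrix (Fin 2) (Fin 2) ℂ),
    ((g :: l).map (Nmat n)).prod = Nmat n ((((g :: l)).map (· * W)).prod * W) := by
  intro l
  induction l with
  | nil =>
      intro g
      simp only [List.map_cons, List.map_nil, List.prod_cons, List.prod_nil, mul_one]
      rw [mul_assoc, W_W, mul_one]
  | cons h l ih =>
      intro g
      rw [List.map_cons, List.prod_cons, ih h]
      rw [Nmat_mul]
      simp only [List.map_cons, List.prod_cons, mul_assoc]

lemma entry (n : ℕ) (x : ℂ) (hx : 1 + x ≠ 0) (r s : Fin (n+1)) :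
    ((n - (r:ℕ)).choose (s:ℕ) : ℂ) * (-x)^(r:ℕ) / (1+x)^((r:ℕ)+(s:ℕ))
      = ((1+x)^n)⁻¹ * Nmat n !![-x, 0; 1+x, 1] r s := by
  have hN : Nmat n !![-x, 0; 1+x, 1] r s
      = (-x)^(r:ℕ) * ((1+x)^((n-(r:ℕ))-(s:ℕ)) * ((n-(r:ℕ)).choose (s:ℕ) : ℂ)) := by
    show ((C (-x) + C 0 * X)^(r:ℕ) * (C (1+x) + C 1 * X)^(n-(r:ℕ))).coeff (s:ℕ) = _
    rw [map_zero, zero_mul, add_zero, map_one, one_mul, add_comm (C (1+x)) X]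
    rw [← map_pow, Polynomial.coeff_C_mul, Polynomial.coeff_X_add_C_pow]
  rw [hN]
  by_cases hs : (s:ℕ) ≤ n - (r:ℕ)
  · have hr : (r:ℕ) ≤ n := Nat.lt_succ_iff.mp r.isLt
    have hpow : (1+x)^((r:ℕ)+(s:ℕ)) * (1+x)^(n-(r:ℕ)-(s:ℕ)) = (1+x)^n := by
      rw [← pow_add]
      congr 1
      omega
    field_simp
    rw [← hpow]
    ring
  · rw [Nat.choose_eq_zero_of_lt (by omega)]
    push_cast
    simp

end Stmt13Aux

open Stmt13Aux in
theorem stmt13 (m n : ℕ) (hm : 0 < m) (hn : 0 < n) (x : Fin m → ℂ)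
    (hx : ∀ k, x k ≠ -1) (hprod : ∏ k, x k ≠ 1) :
    ∑ r : Fin m → Fin (n + 1), ∏ k : Fin m,
      (((n - (r k : ℕ)).choose (r ⟨((k : ℕ) + 1) % m, Nat.mod_lt _ hm⟩ : ℕ) : ℂ) *
        (-(x k)) ^ (r k : ℕ) /
        (1 + x k) ^ ((r k : ℕ) + (r ⟨((k : ℕ) + 1) % m, Nat.mod_lt _ hm⟩ : ℕ)))
    = (1 - (∏ k, x k) ^ (n + 1)) / (1 - ∏ k, x k) * ∏ k : Fin m, ((1 + x k) ^ n)⁻¹ := by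
  have h1x : ∀ k, 1 + x k ≠ 0 := by
    intro k h
    exact hx k (by linear_combination h)
  obtain ⟨m', rfl⟩ : ∃ m', m = m' + 1 := ⟨m - 1, by omega⟩
  set p : ℂ := ∏ k, x k with hp
  have hidx : ∀ k : Fin (m'+1),
      (⟨((k:ℕ) + 1) % (m'+1), Nat.mod_lt _ hm⟩ : Fin (m'+1)) = k + 1 := by
    intro k
    apply Fin.ext
    show ((k:ℕ) + 1) % (m'+1) = ((k + 1 : Fin (m'+1)) : ℕ)
    rw [Fin.val_add, Fin.val_one']
    conv_lhs => rw [Nat.add_mod, Nat.mod_eq_of_lt k.isLt]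
  -- rewrite each summand via entry
  have step1 : ∀ (r : Fin (m'+1) → Fin (n+1)) (k : Fin (m'+1)),
      (((n - (r k : ℕ)).choose (r ⟨((k : ℕ) + 1) % (m'+1), Nat.mod_lt _ hm⟩ : ℕ) : ℂ) *
        (-(x k)) ^ (r k : ℕ) /
        (1 + x k) ^ ((r k : ℕ) + (r ⟨((k : ℕ) + 1) % (m'+1), Nat.mod_lt _ hm⟩ : ℕ)))
      = ((1 + x k)^n)⁻¹ * Nmat n !![-(x k), 0; 1 + x k, 1] (r k) (r (k+1)) := by
    intro r k
    rw [hidx k]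
    exact entry n (x k) (h1x k) (r k) (r (k+1))
  calc ∑ r : Fin (m'+1) → Fin (n + 1), ∏ k : Fin (m'+1),
      (((n - (r k : ℕ)).choose (r ⟨((k : ℕ) + 1) % (m'+1), Nat.mod_lt _ hm⟩ : ℕ) : ℂ) *
        (-(x k)) ^ (r k : ℕ) /
        (1 + x k) ^ ((r k : ℕ) + (r ⟨((k : ℕ) + 1) % (m'+1), Nat.mod_lt _ hm⟩ : ℕ)))
      = ∑ r : Fin (m'+1) → Fin (n+1), ∏ k : Fin (m'+1),
          (((1 + x k)^n)⁻¹ * Nmat n !![-(x k), 0; 1 + x k, 1] (r k) (r (k+1))) := by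
        exact Finset.sum_congr rfl fun r _ => Finset.prod_congr rfl fun k _ => step1 r k
    _ = (∏ k : Fin (m'+1), ((1 + x k)^n)⁻¹) *
          ∑ r : Fin (m'+1) → Fin (n+1), ∏ k : Fin (m'+1),
            Nmat n !![-(x k), 0; 1 + x k, 1] (r k) (r (k+1)) := by
        rw [Finset.mul_sum]
        exact Finset.sum_congr rfl fun r _ => Finset.prod_mul_distrib
    _ = (∏ k : Fin (m'+1), ((1 + x k)^n)⁻¹) *
          Matrix.trace ((List.ofFn fun k : Fin (m'+1) => Nmat n !![-(x k), 0; 1 + x k, 1]).prod) := by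
        rw [cyclicSum m' (fun k => Nmat n !![-(x k), 0; 1 + x k, 1])]
    _ = (∏ k : Fin (m'+1), ((1 + x k)^n)⁻¹) * ((1 - p^(n+1)) / (1 - p)) := by
        congr 1
        -- convert list of Nmat to Nmat of product
        have hofn : (List.ofFn fun k : Fin (m'+1) => Nmat n !![-(x k), 0; 1 + x k, 1])
            = ((List.ofFn fun k : Fin (m'+1) => !![-(x k), 0; 1 + x k, 1]).map (Nmat n)) := by
          rw [List.map_ofFn]
          rfl
        rw [hofn, List.ofFn_succ, Nmat_list]
        have e1 : (!![-x 0, 0; 1 + x 0, 1] :: List.ofFn fun i : Fin m' => !![-x i.succ, 0; 1 + x i.succ, 1])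
            = List.ofFn (fun k : Fin (m'+1) => !![-(x k), 0; 1 + x k, 1]) :=
          (List.ofFn_succ (f := fun k : Fin (m'+1) => !![-(x k), 0; 1 + x k, 1])).symm
        rw [e1]
        have hmap : ((List.ofFn fun k : Fin (m'+1) => !![-(x k), 0; 1 + x k, 1]).map (· * W))
            = (List.ofFn x).map (fun y => !![0, -y; 1, 1+y]) := by
          rw [List.map_ofFn, List.map_ofFn]
          congr 1
          funext k
          show !![-(x k), 0; 1 + x k, 1] * W = _
          ext i j
          fin_cases i <;> fin_cases j <;>
            simp [W, Matrix.mul_apply, Fin.sum_univ_succ]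
        rw [hmap]
        obtain ⟨a, ha⟩ := K_form (List.ofFn x)
        have hxprod : (List.ofFn x).prod = p := by
          rw [List.prod_ofFn]
        rw [hxprod] at ha
        rw [ha, trace_NKW n a p hprod]
        have : (1 - p^(n+1)) / (1 - p) = (p^(n+1) - 1) / (p - 1) := by
          rw [← neg_sub (p^(n+1)) 1, ← neg_sub p 1, neg_div_neg_eq]
        rw [this, geom_sum_eq hprod (n+1)]
    _ = (1 - p ^ (n + 1)) / (1 - p) * ∏ k : Fin (m'+1), ((1 + x k) ^ n)⁻¹ := mul_comm _ _
end
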